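/- arXiv:1504.01464 — 3 statements merged into one kernel-verified Lean document; each statement's English description precedes it below -/
import Mathlib

section
/- Let (G, B, β, ω) be a twisted C*-dynamical system and E a Hilbert (G,B,β,ω)-module with twisted action γ. For ξ ∈ E define Bra(ξ) ζ = [x ↦ ⟨γ_x ξ, ζ⟩_E] and Ket(ξ)[f] = ∫_G γ_x(ξ) · f(x) dx for f ∈ L^{∞,c}(G,B). Then ⟨[f], Bra(ξ) ζ⟩_{L²} = ⟨Ket(ξ)[f], ζ⟩_E for every ξ with Bra(ξ) taking values in L²(G,B), every f ∈ L^{∞,c}(G,B), and every ζ ∈ E. -/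
open MeasureTheory MultiplierAlgebra

/-- A (Busby–Smith) twisted C*-dynamical system `(G, B, β, ω)`: `β : G → Aut(B)` is strongly
measurable, `ω : G × G → U(M(B))` is strictly measurable, with `β₁ = id`, `ω(1,s) = ω(s,1) = 1`,
`β_s ∘ β_t = Ad(ω(s,t)) ∘ β_{st}` and `β_r(ω(s,t)) ω(r,st) = ω(r,s) ω(rs,t)`. -/
structure TwistedSystem (G : Type*) [Group G] [TopologicalSpace G] [MeasurableSpace G]
    (B : Type*) [NonUnitalCStarAlgebra B] where
  β : G → B ≃⋆ₐ[ℂ] B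
  ω : G → G → 𝓜(ℂ, B)
  ω_unitary : ∀ s t, ω s t ∈ unitary (𝓜(ℂ, B))
  β_strMeas : ∀ b : B, StronglyMeasurable fun s => β s b
  ω_strMeas_left : ∀ b : B, StronglyMeasurable fun p : G × G => (ω p.1 p.2).fst b
  ω_strMeas_right : ∀ b : B, StronglyMeasurable fun p : G × G => (ω p.1 p.2).snd b
  β_one : ∀ b, β 1 b = b
  ω_one_left : ∀ s, ω 1 s = 1
  ω_one_right : ∀ s, ω s 1 = 1
  βM : G → 𝓜(ℂ, B) ≃⋆ₐ[ℂ] 𝓜(ℂ, B)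
  βM_coe : ∀ (s : G) (b : B), βM s (b : 𝓜(ℂ, B)) = ((β s b : B) : 𝓜(ℂ, B))
  ad : ∀ (s t : G) (b : B),
    ((β s (β t b) : B) : 𝓜(ℂ, B)) = ω s t * ((β (s * t) b : B) : 𝓜(ℂ, B)) * star (ω s t)
  cocycle : ∀ r s t : G, βM r (ω s t) * ω r (s * t) = ω r s * ω (r * s) t

/-- The twisted left regular action `Γ` on `B`-valued functions:
`(Γ_s φ)(x) = ω(s, s⁻¹x)* · β_s(φ(s⁻¹x))`. -/
noncomputable def twistedGamma {G : Type*} [Group G] [TopologicalSpace G] [MeasurableSpace G]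
    {B : Type*} [NonUnitalCStarAlgebra B]
    (T : TwistedSystem G B) (s : G) (φ : G → B) : G → B :=
  fun x => (star (T.ω s (s⁻¹ * x))).fst (T.β s (φ (s⁻¹ * x)))

open scoped RightActions

/-- The December 2024 Mathlib notion of a (right) Hilbert C⋆-module, `CStarModule`, with its old
meaning: right action of `Aᵐᵒᵖ`, inner product linear and right-`A`-linear in the second slot. -/
class OldCStarModule (A : outParam <| Type*) (E : Type*) [NonUnitalSemiring A] [StarRing A]
    [Module ℂ A] [AddCommGroup E] [Module ℂ E] [PartialOrder A] [SMul Aᵐᵒᵖ E] [Norm A] [Norm E]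
    extends Inner A E where
  inner_add_right {x} {y} {z} : inner x (y + z) = inner x y + inner x z
  inner_self_nonneg {x} : 0 ≤ inner x x
  inner_self {x} : inner x x = 0 ↔ x = 0
  inner_op_smul_right {a : A} {x y : E} : inner x (y <• a) = inner x y * a
  inner_smul_right_complex {z : ℂ} {x} {y} : inner x (z • y) = z • inner x y
  star_inner x y : star (inner x y) = inner y x
  norm_eq_sqrt_norm_inner_self x : ‖x‖ = √‖inner x x‖

/-- A Hilbert `(G,B,β,ω)`-module: a Hilbert C*-module `E` over `B` together with a strongly
measurable twisted action `γ` of `G` by isometric surjections satisfying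
`γ_s(ζ·b) = γ_s(ζ)·β_s(b)`, `⟨γ_s ζ, γ_s η⟩ = β_s⟨ζ,η⟩` and `γ_r γ_s(ζ) = γ_{rs}(ζ)·ω(r,s)*`,
where the right action of `M(B)` on `E` is the canonical extension of the `B`-action. -/
structure TwistedHilbertModule {G : Type*} [Group G] [TopologicalSpace G] [MeasurableSpace G]
    {B : Type*} [NonUnitalCStarAlgebra B] [PartialOrder B] [StarOrderedRing B]
    (T : TwistedSystem G B)
    (E : Type*) [NormedAddCommGroup E] [NormedSpace ℂ E] [CompleteSpace E]
    [SMul Bᵐᵒᵖ E] [OldCStarModule B E] where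
  γ : G → E → E
  γ_isometry : ∀ s, Isometry (γ s)
  γ_surjective : ∀ s, Function.Surjective (γ s)
  γ_add : ∀ s (x y : E), γ s (x + y) = γ s x + γ s y
  γ_strMeas : ∀ x : E, StronglyMeasurable fun s => γ s x
  γ_one : ∀ x : E, γ 1 x = x
  /-- The canonical extension of the right `B`-action on `E` to `M(B)`. -/
  smulM : 𝓜(ℂ, B) → E → E
  smulM_coe : ∀ (b : B) (x : E), smulM (b : 𝓜(ℂ, B)) x = x <• b
  inner_smulM : ∀ (m : 𝓜(ℂ, B)) (x y : E), (inner B x (smulM m y) : B) = m.snd (inner B x y)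
  γ_smul : ∀ (s : G) (x : E) (b : B), γ s (x <• b) = γ s x <• T.β s b
  γ_inner : ∀ (s : G) (x y : E), (inner B (γ s x) (γ s y) : B) = T.β s (inner B x y)
  γ_twist : ∀ (r s : G) (x : E), γ r (γ s x) = smulM (star (T.ω r s)) (γ (r * s) x)

set_option linter.unusedSectionVars false
section Helpers
variable {B : Type*} [NonUnitalCStarAlgebra B] [PartialOrder B] [StarOrderedRing B]
  {E : Type*} [NormedAddCommGroup E] [NormedSpace ℂ E] [SMul Bᵐᵒᵖ E] [OldCStarModule B E]

lemma old_inner_add_left {x y z : E} : inner B (x + y) z = inner B x z + inner B y z := by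
  rw [← OldCStarModule.star_inner z (x + y), OldCStarModule.inner_add_right, star_add,
    OldCStarModule.star_inner, OldCStarModule.star_inner]

lemma old_inner_sub_right {x y z : E} : inner B x (y - z) = inner B x y - inner B x z :=
  map_sub (AddMonoidHom.mk' (fun y => (inner B x y : B))
    (fun _ _ => OldCStarModule.inner_add_right)) y z

lemma old_inner_sub_left {x y z : E} : inner B (x - y) z = inner B x z - inner B y z :=
  map_sub (AddMonoidHom.mk' (fun x => (inner B x z : B))
    (fun _ _ => old_inner_add_left)) x y

lemma old_inner_zero_left {y : E} : inner B (0 : E) y = 0 := by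
  have := old_inner_sub_left (B := B) (x := (0 : E)) (y := 0) (z := y)
  simpa using this

lemma old_inner_zero_right {y : E} : inner B y (0 : E) = 0 := by
  have := old_inner_sub_right (B := B) (x := y) (y := (0 : E)) (z := 0)
  simpa using this

lemma old_inner_op_smul_left {a : B} {x y : E} : inner B (x <• a) y = star a * inner B x y := by
  rw [← OldCStarModule.star_inner y, OldCStarModule.inner_op_smul_right, star_mul,
    OldCStarModule.star_inner]

lemma old_inner_smul_left_real {c : ℝ} {x y : E} : inner B (c • x) y = c • inner B x y := by
  have h : c • x = (c : ℂ) • x := (Complex.coe_smul c x).symm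
  rw [h, ← OldCStarModule.star_inner y, OldCStarModule.inner_smul_right_complex, star_smul,
    OldCStarModule.star_inner, Complex.star_def, Complex.conj_ofReal, Complex.coe_smul]

lemma old_inner_smul_right_real {c : ℝ} {x y : E} : inner B x (c • y) = c • inner B x y := by
  have h : c • y = (c : ℂ) • y := (Complex.coe_smul c y).symm
  rw [h, OldCStarModule.inner_smul_right_complex, Complex.coe_smul]

lemma old_norm_sq_eq {x : E} : ‖x‖ ^ 2 = ‖(inner B x x : B)‖ := by
  rw [OldCStarModule.norm_eq_sqrt_norm_inner_self (A := B) x, Real.sq_sqrt (norm_nonneg _)]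

lemma old_inner_mul_inner_swap_le {x y : E} :
    inner B y x * inner B x y ≤ ‖x‖ ^ 2 • (inner B y y : B) := by
  rcases eq_or_ne x 0 with h | h
  · subst h
    simp [old_inner_zero_left, old_inner_zero_right]
  · have hpos : 0 < ‖x‖ := norm_pos_iff.mpr h
    have h₁ : ∀ a : B, (0 : B) ≤ ‖x‖ ^ 2 • (star a * a) - ‖x‖ ^ 2 • (star a * inner B x y)
        - ‖x‖ ^ 2 • (inner B y x * a) + ‖x‖ ^ 2 • (‖x‖ ^ 2 • (inner B y y : B)) := fun a => by
      calc (0 : B) ≤ inner B (x <• a - ‖x‖ ^ 2 • y) (x <• a - ‖x‖ ^ 2 • y) :=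
            OldCStarModule.inner_self_nonneg
        _ = star a * inner B x x * a - ‖x‖ ^ 2 • (star a * inner B x y)
            - ‖x‖ ^ 2 • (inner B y x * a) + ‖x‖ ^ 2 • (‖x‖ ^ 2 • (inner B y y : B)) := by
          simp only [old_inner_sub_right, OldCStarModule.inner_op_smul_right, old_inner_sub_left,
            old_inner_op_smul_left, old_inner_smul_left_real, old_inner_smul_right_real,
            smul_sub, sub_mul, mul_sub, mul_smul_comm, smul_mul_assoc, mul_assoc]
          abel
        _ ≤ ‖x‖ ^ 2 • (star a * a) - ‖x‖ ^ 2 • (star a * inner B x y)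
            - ‖x‖ ^ 2 • (inner B y x * a) + ‖x‖ ^ 2 • (‖x‖ ^ 2 • (inner B y y : B)) := by
          gcongr
          calc star a * inner B x x * a ≤ ‖(inner B x x : B)‖ • (star a * a) :=
                CStarAlgebra.star_left_conjugate_le_norm_smul (hb := OldCStarModule.star_inner x x)
            _ = ‖x‖ ^ 2 • (star a * a) := by rw [old_norm_sq_eq]
    specialize h₁ (inner B x y)
    simp only [OldCStarModule.star_inner, sub_self, zero_sub, le_neg_add_iff_add_le,
      add_zero] at h₁
    rwa [smul_le_smul_iff_of_pos_left (pow_pos hpos _)] at h₁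

lemma old_norm_inner_le {x y : E} : ‖(inner B x y : B)‖ ≤ ‖x‖ * ‖y‖ := by
  have := calc ‖(inner B x y : B)‖ ^ 2 = ‖inner B y x * (inner B x y : B)‖ := by
                rw [← OldCStarModule.star_inner x y, CStarRing.norm_star_mul_self, pow_two]
    _ ≤ ‖‖x‖ ^ 2 • (inner B y y : B)‖ := by
                refine CStarAlgebra.norm_le_norm_of_nonneg_of_le ?_ old_inner_mul_inner_swap_le
                rw [← OldCStarModule.star_inner x y]
                exact star_mul_self_nonneg _
    _ = ‖x‖ ^ 2 * ‖(inner B y y : B)‖ := by simp [norm_smul]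
    _ = ‖x‖ ^ 2 * ‖y‖ ^ 2 := by rw [old_norm_sq_eq (x := y)]
    _ = (‖x‖ * ‖y‖) ^ 2 := by ring
  exact (pow_le_pow_iff_left₀ (norm_nonneg _) (by positivity) (by simp)).mp this

lemma my_ext_inner_left {u v : E} (h : ∀ z : E, (inner B z u : B) = inner B z v) : u = v := by
  have h0 : (inner B (u - v) (u - v) : B) = 0 := by
    rw [old_inner_sub_right, h (u - v), sub_self]
  exact sub_eq_zero.mp (OldCStarModule.inner_self.mp h0)

lemma my_op_smul_add (x : E) (a b : B) : x <• (a + b) = x <• a + x <• b := by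
  refine my_ext_inner_left fun z => ?_
  simp only [OldCStarModule.inner_op_smul_right, OldCStarModule.inner_add_right, mul_add]

lemma my_add_op_smul (x y : E) (a : B) : (x + y) <• a = x <• a + y <• a := by
  refine my_ext_inner_left fun z => ?_
  simp only [OldCStarModule.inner_op_smul_right, OldCStarModule.inner_add_right, add_mul]

lemma my_smul_op_smul (c : ℂ) (x : E) (a : B) : (c • x) <• a = c • (x <• a) := by
  refine my_ext_inner_left fun z => ?_
  simp only [OldCStarModule.inner_op_smul_right, OldCStarModule.inner_smul_right_complex,
    smul_mul_assoc]

lemma my_op_smul_smul (c : ℂ) (x : E) (a : B) : x <• (c • a) = c • (x <• a) := by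
  refine my_ext_inner_left fun z => ?_
  simp only [OldCStarModule.inner_op_smul_right, OldCStarModule.inner_smul_right_complex,
    mul_smul_comm]

lemma my_norm_op_smul_le (x : E) (a : B) : ‖x <• a‖ ≤ ‖x‖ * ‖a‖ := by
  rw [OldCStarModule.norm_eq_sqrt_norm_inner_self (A := B)]
  have h1 : (inner B (x <• a) (x <• a) : B) = star a * (inner B x x : B) * a := by
    rw [OldCStarModule.inner_op_smul_right, old_inner_op_smul_left, mul_assoc]
  rw [h1]
  have h2 : ‖star a * (inner B x x : B) * a‖ ≤ (‖x‖ * ‖a‖) ^ 2 := by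
    calc ‖star a * (inner B x x : B) * a‖ ≤ ‖star a * (inner B x x : B)‖ * ‖a‖ := norm_mul_le _ _
      _ ≤ ‖star a‖ * ‖(inner B x x : B)‖ * ‖a‖ := by gcongr; exact norm_mul_le _ _
      _ = ‖a‖ * ‖x‖ ^ 2 * ‖a‖ := by
          rw [norm_star, old_norm_sq_eq (B := B)]
      _ = (‖x‖ * ‖a‖) ^ 2 := by ring
  calc Real.sqrt ‖star a * (inner B x x : B) * a‖ ≤ Real.sqrt ((‖x‖ * ‖a‖) ^ 2) :=
        Real.sqrt_le_sqrt h2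
    _ = ‖x‖ * ‖a‖ := Real.sqrt_sq (by positivity)

/-- The op-smul as a continuous bilinear map. -/
noncomputable def opSmulCLM : E →L[ℂ] B →L[ℂ] E :=
  LinearMap.mkContinuous₂
    (LinearMap.mk₂ ℂ (fun x a => x <• a) my_add_op_smul my_smul_op_smul my_op_smul_add
      my_op_smul_smul) 1
    (fun x a => by simpa using my_norm_op_smul_le x a)

@[simp] lemma opSmulCLM_apply (x : E) (a : B) : opSmulCLM x a = x <• a := rfl

/-- Inner product with a fixed right entry, as a real-linear continuous map. -/
noncomputable def innerRightCLM (ζ : E) : E →L[ℝ] B :=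
  LinearMap.mkContinuous
    { toFun := fun x => (inner B x ζ : B)
      map_add' := fun x y => old_inner_add_left
      map_smul' := fun c x => old_inner_smul_left_real }
    ‖ζ‖ (fun x => by
      rw [mul_comm]
      exact old_norm_inner_le)

@[simp] lemma innerRightCLM_apply (ζ x : E) : innerRightCLM ζ x = (inner B x ζ : B) := rfl

end Helpers

/-- the bra–ket adjoint identity `⟨[f], Bra(ξ) ζ⟩_{L²} = ⟨Ket(ξ)[f], ζ⟩_E`
for square-integrable `ξ`, `f ∈ L^{∞,c}(G,B)` and `ζ ∈ E`, where `Bra(ξ)ζ = [x ↦ ⟨γ_x ξ, ζ⟩]`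
and `Ket(ξ)[f] = ∫ γ_x(ξ)·f(x) dx`. -/
theorem bra_ket_adjoint_identity
    {G : Type*} [TopologicalSpace G] [T2Space G] [LocallyCompactSpace G]
    [SecondCountableTopology G] [Group G] [IsTopologicalGroup G]
    [MeasurableSpace G] [BorelSpace G] (μ : Measure G) [μ.IsHaarMeasure]
    {B : Type*} [NonUnitalCStarAlgebra B] [PartialOrder B] [StarOrderedRing B]
    [TopologicalSpace.SeparableSpace B]
    {E : Type*} [NormedAddCommGroup E] [NormedSpace ℂ E] [CompleteSpace E]
    [SMul Bᵐᵒᵖ E] [OldCStarModule B E]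
    (T : TwistedSystem G B) (M : TwistedHilbertModule T E) (ξ : E)
    (hsi : ∀ ζ : E, MemLp (fun x => (inner B (M.γ x ξ) ζ : B)) 2 μ)
    (f : G → B) (hf_bdd : MemLp f ⊤ μ) (hf_supp : HasCompactSupport f) (ζ : E) :
    ∫ x, star (f x) * (inner B (M.γ x ξ) ζ : B) ∂μ
      = (inner B (∫ x, M.γ x ξ <• f x ∂μ) ζ : B) := by
  
    classical
  set g : G → E := fun x => M.γ x ξ <• f x with hg
  have hγ0 : ∀ x, ‖M.γ x ξ‖ = ‖ξ‖ := by
    intro x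
    have h0 : M.γ x 0 = 0 := by
      have h := M.γ_add x 0 0
      simpa using h.symm
    have h := (M.γ_isometry x).dist_eq ξ 0
    simpa [h0, dist_eq_norm] using h
  have hf_int : Integrable f μ := by
    rw [← memLp_one_iff_integrable]
    exact hf_bdd.mono_exponent_of_measure_support_ne_top
      (fun x hx => image_eq_zero_of_notMem_tsupport hx)
      hf_supp.isCompact.measure_lt_top.ne le_top
  have hmeas : AEStronglyMeasurable g μ := by
    have h1 : AEStronglyMeasurable (fun x => (M.γ x ξ, f x)) μ :=
      (M.γ_strMeas ξ).aestronglyMeasurable.prodMk hf_bdd.1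
    have hc : Continuous fun p : E × B => p.1 <• p.2 := by
      have h2 := (opSmulCLM (B := B) (E := E)).continuous₂
      exact h2
    exact hc.comp_aestronglyMeasurable h1
  have hint : Integrable g μ := by
    refine Integrable.mono' (hf_int.norm.const_mul ‖ξ‖) hmeas ?_
    filter_upwards with x
    calc ‖g x‖ ≤ ‖M.γ x ξ‖ * ‖f x‖ := my_norm_op_smul_le _ _
      _ = ‖ξ‖ * ‖f x‖ := by rw [hγ0]
  have key := (innerRightCLM (B := B) ζ).integral_comp_comm hint
  calc ∫ x, star (f x) * (inner B (M.γ x ξ) ζ : B) ∂μ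
      = ∫ x, innerRightCLM ζ (g x) ∂μ := by
        refine integral_congr_ae ?_
        filter_upwards with x
        simp [hg, old_inner_op_smul_left]
    _ = innerRightCLM ζ (∫ x, g x ∂μ) := key
    _ = _ := rfl
end

section
/- Let A be a C*-algebra of adjointable operators on a Hilbert module L, and let F ⊆ Adj(L, E) be a closed linear subspace of adjointable operators from L to another Hilbert module E such that F ∘ A ⊆ F and F* ∘ F ⊆ A. Then F, with right A-action ξ · a = ξ ∘ a and A-valued inner product ⟨ξ, η⟩ = ξ* ∘ η, is a Hilbert A-module, and the Hilbert-module norm coincides with the operator norm. Moreover F = F ∘ F* ∘ F. -/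
set_option linter.unusedSectionVars false
set_option maxHeartbeats 1000000
open scoped RightActions
open Topology Filter

/-- The Mathlib (Dec 2024) notion of a Hilbert C⋆-module with a right action, restated because
Mathlib's `CStarModule` now uses a left action `[SMul A E]`. -/
class CStarModuleRight (A E : Type*) [NonUnitalSemiring A] [StarRing A]
    [Module ℂ A] [AddCommGroup E] [Module ℂ E] [PartialOrder A] [SMul Aᵐᵒᵖ E] [Norm A] [Norm E]
    extends Inner A E where
  inner_add_right {x} {y} {z} : inner x (y + z) = inner x y + inner x z
  inner_self_nonneg {x} : 0 ≤ inner x x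
  inner_self {x} : inner x x = 0 ↔ x = 0
  inner_op_smul_right {a : A} {x y : E} : inner x (y <• a) = inner x y * a
  inner_smul_right_complex {z : ℂ} {x} {y} : inner x (z • y) = z • inner x y
  star_inner x y : star (inner x y) = inner y x
  norm_eq_sqrt_norm_inner_self x : ‖x‖ = √‖inner x x‖

namespace CStarModuleRight
section aux
variable {B : Type*} [NonUnitalCStarAlgebra B] [PartialOrder B] [StarOrderedRing B]
  {L : Type*} [NormedAddCommGroup L] [NormedSpace ℂ L] [SMul Bᵐᵒᵖ L] [CStarModuleRight B L]

attribute [simp] CStarModuleRight.inner_add_right CStarModuleRight.star_inner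
  CStarModuleRight.inner_op_smul_right CStarModuleRight.inner_smul_right_complex

noncomputable def opModule : CStarModule Bᵐᵒᵖ L where
  inner x y := MulOpposite.op (inner B x y)
  inner_add_right {x y z} := by
    show MulOpposite.op _ = MulOpposite.op _ + MulOpposite.op _
    rw [CStarModuleRight.inner_add_right, MulOpposite.op_add]
  inner_self_nonneg {x} := show (0 : Bᵐᵒᵖ) ≤ MulOpposite.op (inner B x x) from
    MulOpposite.op_nonneg.mpr CStarModuleRight.inner_self_nonneg
  inner_self {x} := by
    show MulOpposite.op (inner B x x) = 0 ↔ x = 0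
    rw [MulOpposite.op_eq_zero_iff]
    exact CStarModuleRight.inner_self
  inner_op_smul_right {a x y} := by
    show MulOpposite.op (inner B x (a • y)) = a * MulOpposite.op (inner B x y)
    have h := CStarModuleRight.inner_op_smul_right (A := B) (a := a.unop) (x := x) (y := y)
    rw [MulOpposite.op_unop] at h
    rw [h, MulOpposite.op_mul, MulOpposite.op_unop]
  inner_smul_right_complex {z x y} := by
    show MulOpposite.op (inner B x (z • y)) = z • MulOpposite.op (inner B x y)
    rw [CStarModuleRight.inner_smul_right_complex, MulOpposite.op_smul]
  star_inner x y := by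
    show star (MulOpposite.op (inner B x y)) = MulOpposite.op (inner B y x)
    rw [← MulOpposite.op_star, CStarModuleRight.star_inner]
  norm_eq_sqrt_norm_inner_self x := by
    show ‖x‖ = √‖MulOpposite.op (inner B x x)‖
    rw [MulOpposite.norm_op]
    exact CStarModuleRight.norm_eq_sqrt_norm_inner_self x

lemma norm_sq_eq {x : L} : ‖x‖ ^ 2 = ‖(inner B x x : B)‖ := by
  rw [CStarModuleRight.norm_eq_sqrt_norm_inner_self (A := B) x, Real.sq_sqrt (norm_nonneg _)]

variable (L) in
lemma norm_inner_le {x y : L} : ‖(inner B x y : B)‖ ≤ ‖x‖ * ‖y‖ := by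
  letI := opModule (B := B) (L := L)
  have h := CStarModule.norm_inner_le (A := Bᵐᵒᵖ) L (x := x) (y := y)
  rwa [show (inner Bᵐᵒᵖ x y) = MulOpposite.op (inner B x y) from rfl, MulOpposite.norm_op] at h

lemma continuous_inner : Continuous (fun p : L × L => (inner B p.1 p.2 : B)) := by
  letI := opModule (B := B) (L := L)
  exact MulOpposite.continuous_unop.comp (CStarModule.continuous_inner (A := Bᵐᵒᵖ) (E := L))

@[simp] lemma inner_add_left {x y z : L} : inner B (x + y) z = inner B x z + inner B y z := by
  rw [← CStarModuleRight.star_inner (A := B) z (x + y), CStarModuleRight.inner_add_right,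
    star_add, CStarModuleRight.star_inner, CStarModuleRight.star_inner]

lemma inner_smul_left_complex {z : ℂ} {x y : L} : inner B (z • x) y = star z • inner B x y := by
  rw [← CStarModuleRight.star_inner (A := B) y, CStarModuleRight.inner_smul_right_complex,
    star_smul, CStarModuleRight.star_inner]

@[simp] lemma inner_zero_right {x : L} : inner B x (0 : L) = 0 := by
  have h := CStarModuleRight.inner_add_right (A := B) (x := x) (y := (0 : L)) (z := 0)
  rw [add_zero] at h
  simpa using h

@[simp] lemma inner_zero_left {x : L} : inner B (0 : L) x = 0 := by
  rw [← CStarModuleRight.star_inner (A := B) x 0, inner_zero_right, star_zero]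

@[simp] lemma inner_neg_right {x y : L} : inner B x (-y) = -inner B x y := by
  rw [eq_neg_iff_add_eq_zero, add_comm, ← CStarModuleRight.inner_add_right, add_neg_cancel,
    inner_zero_right]

@[simp] lemma inner_sub_right {x y z : L} : inner B x (y - z) = inner B x y - inner B x z := by
  rw [sub_eq_add_neg, CStarModuleRight.inner_add_right, inner_neg_right, ← sub_eq_add_neg]

@[simp] lemma inner_neg_left {x y : L} : inner B (-x) y = -inner B x y := by
  rw [← CStarModuleRight.star_inner (A := B) y (-x), inner_neg_right, star_neg,
    CStarModuleRight.star_inner]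

@[simp] lemma inner_sub_left {x y z : L} : inner B (x - y) z = inner B x z - inner B y z := by
  rw [← CStarModuleRight.star_inner (A := B) z (x - y), inner_sub_right, star_sub,
    CStarModuleRight.star_inner, CStarModuleRight.star_inner]

end aux
end CStarModuleRight

namespace St16
section
variable {B : Type*} [NonUnitalCStarAlgebra B] [PartialOrder B] [StarOrderedRing B]
    {L : Type*} [NormedAddCommGroup L] [NormedSpace ℂ L] [CompleteSpace L]
    [SMul Bᵐᵒᵖ L] [CStarModuleRight B L]
    {E : Type*} [NormedAddCommGroup E] [NormedSpace ℂ E] [CompleteSpace E]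
    [SMul Bᵐᵒᵖ E] [CStarModuleRight B E]

variable (B L E) in
def IsAdjointPair (T : L →L[ℂ] E) (S : E →L[ℂ] L) : Prop :=
  ∀ (x : L) (y : E), (inner B (T x) y : B) = inner B x (S y)

namespace IsAdjointPair
variable {T T' : L →L[ℂ] E} {S S' : E →L[ℂ] L}

lemma symm (h : IsAdjointPair B L E T S) : IsAdjointPair B E L S T := by
  intro y x
  rw [← CStarModuleRight.star_inner, ← h, CStarModuleRight.star_inner]

lemma add (h : IsAdjointPair B L E T S) (h' : IsAdjointPair B L E T' S') :
    IsAdjointPair B L E (T + T') (S + S') := by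
  intro x y
  calc (inner B (T x + T' x) y : B) = inner B (T x) y + inner B (T' x) y := by simp
  _ = inner B x (S y) + inner B x (S' y) := by rw [h, h']
  _ = _ := by simp

lemma smul (c : ℂ) (h : IsAdjointPair B L E T S) :
    IsAdjointPair B L E (c • T) ((starRingEnd ℂ) c • S) := by
  intro x y
  rw [ContinuousLinearMap.smul_apply, ContinuousLinearMap.smul_apply,
    CStarModuleRight.inner_smul_left_complex, h, ← CStarModuleRight.inner_smul_right_complex,
    starRingEnd_apply]

lemma zero : IsAdjointPair B L E 0 0 := by intro x y; simp

lemma neg (h : IsAdjointPair B L E T S) : IsAdjointPair B L E (-T) (-S) := by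
  have := h.smul (-1)
  simpa using this

lemma sub (h : IsAdjointPair B L E T S) (h' : IsAdjointPair B L E T' S') :
    IsAdjointPair B L E (T - T') (S - S') := by
  have := h.add h'.neg
  simpa [sub_eq_add_neg] using this

lemma nsmul (n : ℕ) (h : IsAdjointPair B L E T S) :
    IsAdjointPair B L E (n • T) (n • S) := by
  have := h.smul n
  simpa [Nat.cast_smul_eq_nsmul] using this

lemma zsmul (n : ℤ) (h : IsAdjointPair B L E T S) :
    IsAdjointPair B L E (n • T) (n • S) := by
  have := h.smul n
  simpa [Int.cast_smul_eq_zsmul] using this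

lemma comp {M : Type*} [NormedAddCommGroup M] [NormedSpace ℂ M] [CompleteSpace M]
    [SMul Bᵐᵒᵖ M] [CStarModuleRight B M] {T₂ : E →L[ℂ] M} {S₂ : M →L[ℂ] E}
    (h₂ : IsAdjointPair B E M T₂ S₂) (h : IsAdjointPair B L E T S) :
    IsAdjointPair B L M (T₂.comp T) (S.comp S₂) := by
  intro x y
  calc (inner B (T₂ (T x)) y : B) = inner B (T x) (S₂ y) := h₂ _ _
  _ = inner B x (S (S₂ y)) := h _ _

lemma apply_norm_le (h : IsAdjointPair B L E T S) (y : E) : ‖S y‖ ≤ ‖T‖ * ‖y‖ := by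
  have key : ‖S y‖ ^ 2 ≤ (‖T‖ * ‖y‖) * ‖S y‖ := by
    calc ‖S y‖ ^ 2 = ‖(inner B (S y) (S y) : B)‖ := CStarModuleRight.norm_sq_eq
    _ = ‖(inner B (T (S y)) y : B)‖ := by rw [h]
    _ ≤ ‖T (S y)‖ * ‖y‖ := CStarModuleRight.norm_inner_le E
    _ ≤ (‖T‖ * ‖S y‖) * ‖y‖ := by gcongr; exact T.le_opNorm _
    _ = (‖T‖ * ‖y‖) * ‖S y‖ := by ring
  rcases eq_or_lt_of_le (norm_nonneg (S y)) with h0 | h0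
  · rw [← h0]; positivity
  · nlinarith [key]

lemma norm_le (h : IsAdjointPair B L E T S) : ‖S‖ ≤ ‖T‖ :=
  S.opNorm_le_bound (norm_nonneg T) h.apply_norm_le

lemma norm_eq (h : IsAdjointPair B L E T S) : ‖S‖ = ‖T‖ :=
  le_antisymm h.norm_le h.symm.norm_le

lemma norm_sq_eq (h : IsAdjointPair B L E T S) : ‖T‖ ^ 2 = ‖S.comp T‖ := by
  refine le_antisymm ?_ ?_
  · have hb : ∀ x : L, ‖T x‖ ≤ Real.sqrt ‖S.comp T‖ * ‖x‖ := by
      intro x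
      have key : ‖T x‖ ^ 2 ≤ ‖S.comp T‖ * ‖x‖ ^ 2 := by
        calc ‖T x‖ ^ 2 = ‖(inner B (T x) (T x) : B)‖ := CStarModuleRight.norm_sq_eq
        _ = ‖(inner B x (S (T x)) : B)‖ := by rw [h]
        _ ≤ ‖x‖ * ‖S (T x)‖ := CStarModuleRight.norm_inner_le L
        _ ≤ ‖x‖ * (‖S.comp T‖ * ‖x‖) := by gcongr; exact (S.comp T).le_opNorm x
        _ = ‖S.comp T‖ * ‖x‖ ^ 2 := by ring
      have h1 : ‖T x‖ ≤ Real.sqrt (‖S.comp T‖ * ‖x‖ ^ 2) := by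
        rw [show ‖T x‖ = Real.sqrt (‖T x‖ ^ 2) by simp [Real.sqrt_sq]]
        exact Real.sqrt_le_sqrt key
      rw [Real.sqrt_mul (norm_nonneg _), Real.sqrt_sq (norm_nonneg _)] at h1
      exact h1
    have := T.opNorm_le_bound (Real.sqrt_nonneg _) hb
    calc ‖T‖ ^ 2 ≤ Real.sqrt ‖S.comp T‖ ^ 2 := pow_le_pow_left₀ (norm_nonneg T) this 2
    _ = ‖S.comp T‖ := Real.sq_sqrt (norm_nonneg _)
  · calc ‖S.comp T‖ ≤ ‖S‖ * ‖T‖ := S.opNorm_comp_le T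
    _ = ‖T‖ ^ 2 := by rw [h.norm_eq]; ring

lemma unique (h : IsAdjointPair B L E T S) (h' : IsAdjointPair B L E T S') : S = S' := by
  ext y
  have key : ∀ x : L, (inner B x (S y - S' y) : B) = 0 := by
    intro x
    have h2 : (inner B x (S y) : B) - inner B x (S' y) = 0 := by
      rw [← h, ← h']; simp
    calc (inner B x (S y - S' y) : B)
        = inner B x (S y) + (-1 : ℂ) • (inner B x (S' y) : B) := by
          rw [show (S y : L) - S' y = S y + (-1 : ℂ) • S' y by module,
            CStarModuleRight.inner_add_right, CStarModuleRight.inner_smul_right_complex]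
    _ = inner B x (S y) - inner B x (S' y) := by rw [neg_one_smul ℂ]; abel
    _ = 0 := h2
  have := key (S y - S' y)
  rw [CStarModuleRight.inner_self] at this
  exact sub_eq_zero.mp this

end IsAdjointPair

variable (B L) in
/-- The C*-algebra of adjointable operator pairs on `L`. -/
structure Adj where
  T : L →L[ℂ] L
  S : L →L[ℂ] L
  adj : IsAdjointPair B L L T S

namespace Adj

@[ext] lemma ext' {a b : Adj B L} (h : a.T = b.T) : a = b := by
  cases a with | mk T S hTS =>
  cases b with | mk T' S' hTS' =>
  subst h
  obtain rfl := hTS.unique hTS'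
  rfl

noncomputable instance : Zero (Adj B L) := ⟨⟨0, 0, .zero⟩⟩
noncomputable instance : Add (Adj B L) := ⟨fun a b => ⟨a.T + b.T, a.S + b.S, a.adj.add b.adj⟩⟩
noncomputable instance : Neg (Adj B L) := ⟨fun a => ⟨-a.T, -a.S, a.adj.neg⟩⟩
noncomputable instance : Sub (Adj B L) := ⟨fun a b => ⟨a.T - b.T, a.S - b.S, a.adj.sub b.adj⟩⟩
noncomputable instance : Mul (Adj B L) := ⟨fun a b => ⟨a.T.comp b.T, b.S.comp a.S, a.adj.comp b.adj⟩⟩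
noncomputable instance : SMul ℂ (Adj B L) :=
  ⟨fun c a => ⟨c • a.T, (starRingEnd ℂ) c • a.S, a.adj.smul c⟩⟩
noncomputable instance : SMul ℕ (Adj B L) := ⟨fun n a => ⟨n • a.T, n • a.S, a.adj.nsmul n⟩⟩
noncomputable instance : SMul ℤ (Adj B L) := ⟨fun n a => ⟨n • a.T, n • a.S, a.adj.zsmul n⟩⟩
noncomputable instance : Star (Adj B L) := ⟨fun a => ⟨a.S, a.T, a.adj.symm⟩⟩

@[simp] lemma zero_T : (0 : Adj B L).T = 0 := rfl
@[simp] lemma zero_S : (0 : Adj B L).S = 0 := rfl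
@[simp] lemma add_T (a b : Adj B L) : (a + b).T = a.T + b.T := rfl
@[simp] lemma add_S (a b : Adj B L) : (a + b).S = a.S + b.S := rfl
@[simp] lemma neg_T (a : Adj B L) : (-a).T = -a.T := rfl
@[simp] lemma sub_T (a b : Adj B L) : (a - b).T = a.T - b.T := rfl
@[simp] lemma sub_S (a b : Adj B L) : (a - b).S = a.S - b.S := rfl
@[simp] lemma mul_T (a b : Adj B L) : (a * b).T = a.T.comp b.T := rfl
@[simp] lemma mul_S (a b : Adj B L) : (a * b).S = b.S.comp a.S := rfl
@[simp] lemma smul_T (c : ℂ) (a : Adj B L) : (c • a).T = c • a.T := rfl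
@[simp] lemma smul_S (c : ℂ) (a : Adj B L) : (c • a).S = (starRingEnd ℂ) c • a.S := rfl
@[simp] lemma star_T (a : Adj B L) : (star a).T = a.S := rfl
@[simp] lemma star_S (a : Adj B L) : (star a).S = a.T := rfl

lemma T_injective : Function.Injective (Adj.T : Adj B L → _) := fun _ _ h => ext' h

noncomputable instance : NonUnitalRing (Adj B L) :=
  T_injective.nonUnitalRing Adj.T rfl (fun _ _ => rfl) (fun _ _ => rfl) (fun _ => rfl)
    (fun _ _ => rfl) (fun _ _ => rfl) (fun _ _ => rfl)

noncomputable instance : Module ℂ (Adj B L) where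
  one_smul a := by ext : 1; simp
  mul_smul c d a := by ext : 1; simp [mul_smul]
  smul_zero c := by ext : 1; simp
  smul_add c a b := by ext : 1; simp
  add_smul c d a := by ext : 1; simp [add_smul]
  zero_smul a := by ext : 1; simp

variable (B L) in
/-- `Adj.T` as an `AddMonoidHom`. -/
def Thom : Adj B L →+ (L →L[ℂ] L) where
  toFun := Adj.T
  map_zero' := rfl
  map_add' _ _ := rfl

noncomputable instance : NormedAddCommGroup (Adj B L) :=
  NormedAddCommGroup.induced (Adj B L) (L →L[ℂ] L) (Thom B L) T_injective

lemma norm_def (a : Adj B L) : ‖a‖ = ‖a.T‖ := rfl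
lemma norm_eq_norm_S (a : Adj B L) : ‖a‖ = ‖a.S‖ := (a.adj.norm_eq).symm

noncomputable instance : NonUnitalNormedRing (Adj B L) :=
  { (inferInstance : NormedAddCommGroup (Adj B L)),
    (inferInstance : NonUnitalRing (Adj B L)) with
    norm_mul_le := fun a b => a.T.opNorm_comp_le b.T }

noncomputable instance : NormedSpace ℂ (Adj B L) where
  norm_smul_le c a := by
    rw [norm_def, smul_T, norm_def]
    exact (norm_smul_le c a.T)

instance : IsScalarTower ℂ (Adj B L) (Adj B L) :=
  ⟨fun c a b => by ext : 1; simp [ContinuousLinearMap.smul_comp]⟩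

instance : SMulCommClass ℂ (Adj B L) (Adj B L) :=
  ⟨fun c a b => by ext : 1; simp [ContinuousLinearMap.comp_smul]⟩

noncomputable instance : StarRing (Adj B L) where
  star_involutive a := by ext : 1; rfl
  star_mul a b := by ext : 1; rfl
  star_add a b := by ext : 1; rfl

instance : StarModule ℂ (Adj B L) :=
  ⟨fun c a => by ext : 1; simp⟩

instance : CStarRing (Adj B L) where
  norm_mul_self_le a := by
    have h : ‖star a * a‖ = ‖a‖ * ‖a‖ := by
      rw [norm_def, mul_T, star_T, norm_def, ← pow_two, a.adj.norm_sq_eq]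
    exact h.ge

instance : CompleteSpace (Adj B L) := by
  apply Metric.complete_of_cauchySeq_tendsto
  intro u hu
  have hT : CauchySeq (fun n => (u n).T) := by
    rw [Metric.cauchySeq_iff] at hu ⊢
    intro ε hε
    obtain ⟨N, hN⟩ := hu ε hε
    exact ⟨N, fun m hm n hn => hN m hm n hn⟩
  have hS : CauchySeq (fun n => (u n).S) := by
    rw [Metric.cauchySeq_iff] at hu ⊢
    intro ε hε
    obtain ⟨N, hN⟩ := hu ε hε
    refine ⟨N, fun m hm n hn => ?_⟩
    have h := hN m hm n hn
    rw [dist_eq_norm] at h ⊢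
    rw [← sub_S, ← norm_eq_norm_S]
    exact h
  obtain ⟨Tlim, hTlim⟩ := cauchySeq_tendsto_of_complete hT
  obtain ⟨Slim, hSlim⟩ := cauchySeq_tendsto_of_complete hS
  have hadj : IsAdjointPair B L L Tlim Slim := by
    intro x y
    have h1 : Filter.Tendsto (fun n => (inner B ((u n).T x) y : B)) Filter.atTop
        (nhds (inner B (Tlim x) y)) := by
      have : Filter.Tendsto (fun n => (u n).T x) Filter.atTop (nhds (Tlim x)) :=
        (ContinuousLinearMap.apply ℂ L x |>.continuous.tendsto _).comp hTlim
      exact (CStarModuleRight.continuous_inner.tendsto _).comp (this.prodMk_nhds tendsto_const_nhds)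
    have h2 : Filter.Tendsto (fun n => (inner B x ((u n).S y) : B)) Filter.atTop
        (nhds (inner B x (Slim y))) := by
      have : Filter.Tendsto (fun n => (u n).S y) Filter.atTop (nhds (Slim y)) :=
        (ContinuousLinearMap.apply ℂ L y |>.continuous.tendsto _).comp hSlim
      exact (CStarModuleRight.continuous_inner.tendsto _).comp (tendsto_const_nhds.prodMk_nhds this)
    have heq : (fun n => (inner B ((u n).T x) y : B)) = fun n => (inner B x ((u n).S y) : B) := by
      funext n; exact (u n).adj x y
    rw [heq] at h1
    exact tendsto_nhds_unique h1 h2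
  refine ⟨⟨Tlim, Slim, hadj⟩, ?_⟩
  rw [Metric.tendsto_atTop] at hTlim ⊢
  intro ε hε
  obtain ⟨N, hN⟩ := hTlim ε hε
  exact ⟨N, fun n hn => hN n hn⟩

noncomputable instance : NonUnitalCStarAlgebra (Adj B L) where

lemma sa_S_eq_T {a : Adj B L} (ha : IsSelfAdjoint a) : a.S = a.T := by
  rw [show a.S = (star a).T from rfl, ha]

@[simp] lemma rsmul_T (r : ℝ) (a : Adj B L) : (r • a).T = (r : ℂ) • a.T := rfl

lemma isometry_T : Isometry (Adj.T : Adj B L → _) :=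
  AddMonoidHomClass.isometry_of_norm (Thom B L) (fun _ => rfl)

/-- If `A` is a closed star-subalgebra of operators (in the sense of the hypotheses) and
`a.T ∈ A`, then `(cfcₙ f a).T ∈ A`. -/
lemma cfcₙ_T_mem {A : Set (L →L[ℂ] L)}
    (hA_closed : IsClosed A)
    (hA_add : ∀ x ∈ A, ∀ y ∈ A, x + y ∈ A)
    (hA_smul : ∀ (c : ℂ), ∀ x ∈ A, c • x ∈ A)
    (hA_mul : ∀ x ∈ A, ∀ y ∈ A, x.comp y ∈ A)
    (hA_star : ∀ d : Adj B L, d.T ∈ A → d.S ∈ A)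
    {a : Adj B L} (ha : IsSelfAdjoint a) (haT : a.T ∈ A)
    (f : ℝ → ℝ) (hf : ContinuousOn f (quasispectrum ℝ a)) (hf0 : f 0 = 0) :
    (cfcₙ f a).T ∈ A := by
  have h0 : ((0 : quasispectrum ℝ a) : ℝ) = 0 := rfl
  have key : ∀ g : ContinuousMapZero (quasispectrum ℝ a) ℝ, (cfcₙHom ha g).T ∈ A := by
    intro g
    induction g using ContinuousMapZero.induction_on_of_compact with
    | zero => rw [map_zero]; simpa using hA_smul 0 _ haT
    | id =>
        have hid : cfcₙHom ha (ContinuousMapZero.id (quasispectrum ℝ a)) = a := cfcₙHom_id ha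
        rw [hid]; exact haT
    | star_id =>
        have hid : cfcₙHom ha (ContinuousMapZero.id (quasispectrum ℝ a)) = a := cfcₙHom_id ha
        rw [map_star, hid]
        rw [show (star a).T = a.S from rfl, sa_S_eq_T ha]
        exact haT
    | add g₁ g₂ h₁ h₂ => rw [map_add]; exact hA_add _ h₁ _ h₂
    | mul g₁ g₂ h₁ h₂ => rw [map_mul]; exact hA_mul _ h₁ _ h₂
    | smul r g hg =>
        rw [map_smul]
        rw [rsmul_T]
        exact hA_smul _ _ hg
    | frequently g hg =>
        have hcl : IsClosed {g : ContinuousMapZero (quasispectrum ℝ a) ℝ | (cfcₙHom ha g).T ∈ A} := by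
          have hc : Continuous (fun g : ContinuousMapZero (quasispectrum ℝ a) ℝ =>
              (cfcₙHom ha g).T) :=
            isometry_T.continuous.comp (cfcₙHom_continuous ha)
          exact hA_closed.preimage hc
        exact hcl.closure_subset (mem_closure_iff_frequently.mpr hg)
  rw [cfcₙ_apply f a hf hf0 ha]
  exact key _

lemma inner_T_apply {a : Adj B L} (ha : IsSelfAdjoint a) (x y : L) :
    (inner B x (a.T y) : B) = inner B (a.T x) y := by
  rw [a.adj x y, sa_S_eq_T ha]

/-- If `⟪x, a x⟫ ≥ 0` for all `x`, then the `ℝ`-quasispectrum of `a` is nonnegative. -/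
lemma quasispectrum_nonneg_of_inner {a : Adj B L} (ha : IsSelfAdjoint a)
    (hpos : ∀ x : L, 0 ≤ (inner B x (a.T x) : B)) :
    ∀ t ∈ quasispectrum ℝ a, 0 ≤ t := by
  set g : ℝ → ℝ := fun t => max (-t) 0 with hg
  have hgc : Continuous g := continuous_neg.max continuous_const
  have hg0 : g 0 = 0 := by simp [hg]
  have hgnn : ∀ t, 0 ≤ g t := fun t => le_max_right _ _
  set k : Adj B L := cfcₙ (fun t => g t * Real.sqrt (g t)) a with hk
  have hkc : Continuous fun t => g t * Real.sqrt (g t) :=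
    hgc.mul (Real.continuous_sqrt.comp hgc)
  have hk0 : (fun t => g t * Real.sqrt (g t)) 0 = 0 := by simp [hg0]
  have hksa : IsSelfAdjoint k := cfcₙ_predicate _ a
  set c : Adj B L := cfcₙ g a with hc
  have hcsa : IsSelfAdjoint c := cfcₙ_predicate _ a
  -- c * a * c = -(k * k)
  have e1 : cfcₙ (fun t => g t * (t * g t)) a = cfcₙ g a * cfcₙ (fun t : ℝ => t * g t) a :=
    cfcₙ_mul g (fun t => t * g t) a hgc.continuousOn hg0
      ((continuous_id'.mul hgc).continuousOn) (by simp [hg0])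
  have e2 : cfcₙ (fun t : ℝ => t * g t) a = cfcₙ (fun t : ℝ => t) a * cfcₙ g a :=
    cfcₙ_mul (fun t : ℝ => t) g a continuous_id'.continuousOn rfl hgc.continuousOn hg0
  have e3 : cfcₙ (fun t : ℝ => t) a = a := cfcₙ_id' ℝ a
  have key : c * (a * c) = -(k * k) := by
    have h1 : c * (a * c) = cfcₙ (fun t => g t * (t * g t)) a := by
      rw [e1, e2, e3]
    have h2 : k * k = cfcₙ (fun t => (g t * Real.sqrt (g t)) * (g t * Real.sqrt (g t))) a := by
      rw [cfcₙ_mul _ _ a hkc.continuousOn hk0 hkc.continuousOn hk0]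
    have h3 : (fun t => g t * (t * g t)) = fun t => -((g t * Real.sqrt (g t)) * (g t * Real.sqrt (g t))) := by
      funext t
      rcases le_or_gt t 0 with h | h
      · have hgt : g t = -t := max_eq_left (by simp; linarith)
        have hsq : Real.sqrt (-t) * Real.sqrt (-t) = -t := Real.mul_self_sqrt (by linarith)
        rw [hgt]
        linear_combination (t * t) * hsq
      · have hgt : g t = 0 := max_eq_right (by simp; linarith)
        simp [hgt]
    rw [h1, h2, h3, cfcₙ_neg]
  -- positivity both ways
  have hkpos : ∀ x : L, (0:B) ≤ inner B x ((k * k).T x) := by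
    intro x
    rw [show ((k * k).T x) = k.T (k.T x) from rfl, inner_T_apply hksa]
    exact CStarModuleRight.inner_self_nonneg
  have hcacpos : ∀ x : L, (0:B) ≤ inner B x ((c * (a * c)).T x) := by
    intro x
    rw [show ((c * (a * c)).T x) = c.T (a.T (c.T x)) from rfl, inner_T_apply hcsa]
    exact hpos (c.T x)
  have hkT0 : k.T = 0 := by
    ext x
    have h1 := hkpos x
    have h2 := hcacpos x
    rw [key] at h2
    have h4 : (inner B x ((-(k * k)).T x) : B) = - inner B x ((k * k).T x) := by
      rw [show ((-(k * k)).T x) = (-1 : ℂ) • ((k * k).T x) by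
        rw [show (-(k * k)).T = -((k * k).T) from rfl]; simp,
        CStarModuleRight.inner_smul_right_complex]
      simp
    rw [h4] at h2
    have h5 : (inner B x ((k * k).T x) : B) = 0 :=
      le_antisymm (neg_nonneg.mp h2) h1
    rw [show ((k * k).T x) = k.T (k.T x) from rfl, inner_T_apply hksa] at h5
    rw [CStarModuleRight.inner_self] at h5
    simpa using h5
  -- conclude
  intro t ht
  by_contra hlt
  push_neg at hlt
  have hb := norm_apply_le_norm_cfcₙ (fun t => g t * Real.sqrt (g t)) a ht hkc.continuousOn hk0 ha
  have hknorm : ‖k‖ = 0 := by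
    rw [norm_def, hkT0]; simp
  rw [← hk, hknorm] at hb
  have hgt : g t = -t := max_eq_left (by simp; linarith)
  have hpos' : 0 < g t * Real.sqrt (g t) := by
    rw [hgt]
    have h1 : (0:ℝ) < -t := by linarith
    exact mul_pos h1 (Real.sqrt_pos.mpr h1)
  rw [Real.norm_eq_abs, abs_of_pos hpos'] at hb
  linarith

end Adj
end

section helpers
variable {B : Type*} [NonUnitalCStarAlgebra B] [PartialOrder B] [StarOrderedRing B]
    {L : Type*} [NormedAddCommGroup L] [NormedSpace ℂ L] [CompleteSpace L]
    [SMul Bᵐᵒᵖ L] [CStarModuleRight B L]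
    {E : Type*} [NormedAddCommGroup E] [NormedSpace ℂ E] [CompleteSpace E]
    [SMul Bᵐᵒᵖ E] [CStarModuleRight B E]

open Filter in
lemma tendsto_clm_comp {X Y Z : Type*} [NormedAddCommGroup X] [NormedSpace ℂ X]
    [NormedAddCommGroup Y] [NormedSpace ℂ Y] [NormedAddCommGroup Z] [NormedSpace ℂ Z]
    {f : ℕ → (Y →L[ℂ] Z)} {g : ℕ → (X →L[ℂ] Y)} {F : Y →L[ℂ] Z} {G : X →L[ℂ] Y}
    (hf : Tendsto f atTop (𝓝 F)) (hg : Tendsto g atTop (𝓝 G)) :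
    Tendsto (fun n => (f n).comp (g n)) atTop (𝓝 (F.comp G)) := by
  have h := (isBoundedBilinearMap_comp (𝕜 := ℂ) (E := X) (F := Y) (G := Z)).continuous
  exact (h.tendsto (F, G)).comp (hf.prodMk_nhds hg)

end helpers

section estimates

lemma rpow_two_thirds_sq {t : ℝ} (ht : 0 ≤ t) :
    (t ^ (2/3 : ℝ)) ^ 2 = t ^ (4/3 : ℝ) := by
  rw [← Real.rpow_natCast (t ^ (2/3 : ℝ)) 2, ← Real.rpow_mul ht]
  norm_num

lemma rpow_two_thirds_cube {t : ℝ} (ht : 0 ≤ t) :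
    (t ^ (2/3 : ℝ)) ^ 3 = t ^ 2 := by
  rw [← Real.rpow_natCast (t ^ (2/3 : ℝ)) 3, ← Real.rpow_mul ht]
  norm_num

lemma est1 {t ε δ : ℝ} (ht : 0 ≤ t) (hδ : 0 < δ) (hδε : δ ≤ ε) :
    t * (t ^ (2/3 : ℝ) / (t + ε) - t ^ (2/3 : ℝ) / (t + δ)) ^ 2 ≤ ε ^ (1/3 : ℝ) := by
  have hε : 0 < ε := lt_of_lt_of_le hδ hδε
  have htε : 0 < t + ε := by linarith
  have htδ : 0 < t + δ := by linarith
  have hdiff : t ^ (2/3 : ℝ) / (t + ε) - t ^ (2/3 : ℝ) / (t + δ)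
      = t ^ (2/3 : ℝ) * (δ - ε) / ((t + ε) * (t + δ)) := by
    field_simp
    ring
  rw [hdiff, div_pow, mul_pow, mul_pow, rpow_two_thirds_sq ht]
  rw [← mul_div_assoc, div_le_iff₀ (by positivity)]
  -- t * (t^{4/3} * (δ-ε)^2) ≤ ε^{1/3} * ((t+ε)^2 * (t+δ)^2)
  have h73 : t * t ^ (4/3 : ℝ) = t ^ (1/3 : ℝ) * t ^ 2 := by
    rcases eq_or_lt_of_le ht with h0 | h0
    · rw [← h0]
      rw [Real.zero_rpow (by norm_num), Real.zero_rpow (by norm_num)]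
      ring
    · have e2 : (t:ℝ) ^ 2 = t ^ ((2:ℕ):ℝ) := by rw [Real.rpow_natCast]
      calc t * t ^ (4/3 : ℝ) = t ^ (1:ℝ) * t ^ (4/3 : ℝ) := by rw [Real.rpow_one]
      _ = t ^ ((1:ℝ) + 4/3) := (Real.rpow_add h0 _ _).symm
      _ = t ^ ((1/3:ℝ) + ((2:ℕ):ℝ)) := by norm_num
      _ = t ^ (1/3:ℝ) * t ^ ((2:ℕ):ℝ) := Real.rpow_add h0 _ _
      _ = t ^ (1/3:ℝ) * t ^ 2 := by rw [← e2]
  calc t * (t ^ (4/3 : ℝ) * (δ - ε) ^ 2) = (t * t ^ (4/3 : ℝ)) * (δ - ε) ^ 2 := by ring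
  _ = t ^ (1/3 : ℝ) * t ^ 2 * (δ - ε) ^ 2 := by rw [h73]
  _ ≤ (t + ε) ^ (1/3 : ℝ) * (t + δ) ^ 2 * (ε ^ (1/3 : ℝ) * (t + ε) ^ (5/3 : ℝ)) := by
      have b1 : t ^ (1/3 : ℝ) ≤ (t + ε) ^ (1/3 : ℝ) :=
        Real.rpow_le_rpow ht (by linarith) (by norm_num)
      have b2 : t ^ 2 ≤ (t + δ) ^ 2 := by nlinarith
      have b3 : (δ - ε) ^ 2 ≤ ε ^ (1/3 : ℝ) * (t + ε) ^ (5/3 : ℝ) := by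
        have c1 : (δ - ε) ^ 2 ≤ ε ^ 2 := by nlinarith
        have c2 : (ε : ℝ) ^ 2 = ε ^ (1/3 : ℝ) * ε ^ (5/3 : ℝ) := by
          rw [← Real.rpow_add hε, show (1/3:ℝ) + 5/3 = ((2:ℕ):ℝ) by norm_num,
            Real.rpow_natCast]
        have c3 : ε ^ (5/3 : ℝ) ≤ (t + ε) ^ (5/3 : ℝ) :=
          Real.rpow_le_rpow hε.le (by linarith) (by norm_num)
        calc (δ - ε) ^ 2 ≤ ε ^ 2 := c1
        _ = ε ^ (1/3 : ℝ) * ε ^ (5/3 : ℝ) := c2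
        _ ≤ ε ^ (1/3 : ℝ) * (t + ε) ^ (5/3 : ℝ) := by gcongr
      exact mul_le_mul (mul_le_mul b1 b2 (sq_nonneg t) (Real.rpow_nonneg htε.le _)) b3
        (sq_nonneg _) (by positivity)
  _ = ε ^ (1/3 : ℝ) * (((t + ε) ^ (1/3 : ℝ) * (t + ε) ^ (5/3 : ℝ)) * (t + δ) ^ 2) := by ring
  _ = ε ^ (1/3 : ℝ) * ((t + ε) ^ 2 * (t + δ) ^ 2) := by
      rw [← Real.rpow_add htε, show (1/3:ℝ) + 5/3 = ((2:ℕ):ℝ) by norm_num,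
        Real.rpow_natCast]

lemma est2 {t ε : ℝ} (ht : 0 ≤ t) (hε : 0 < ε) :
    t * (t * (t ^ (2/3 : ℝ) / (t + ε)) ^ 3 - 1) ^ 2 ≤ 9/4 * ε := by
  have htε : 0 < t + ε := by linarith
  rw [div_pow, rpow_two_thirds_cube ht]
  have h1 : t * (t ^ 2 / (t + ε) ^ 3) = t ^ 3 / (t + ε) ^ 3 := by
    field_simp
  rw [h1]
  have h2 : t ^ 3 / (t + ε) ^ 3 - 1 = (t ^ 3 - (t + ε) ^ 3) / (t + ε) ^ 3 := by
    field_simp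
  rw [h2, div_pow, ← mul_div_assoc, div_le_iff₀ (by positivity)]
  -- t * (t^3 - (t+ε)^3)^2 ≤ 9/4 ε ((t+ε)^3)^2
  have key : (t ^ 3 - (t + ε) ^ 3) ^ 2 ≤ 9 * ε ^ 2 * (t + ε) ^ 4 := by
    have e1 : (t + ε) ^ 3 - t ^ 3 = ε * (3 * t ^ 2 + 3 * t * ε + ε ^ 2) := by ring
    have e2 : 3 * t ^ 2 + 3 * t * ε + ε ^ 2 ≤ 3 * (t + ε) ^ 2 := by nlinarith
    have e3 : 0 ≤ 3 * t ^ 2 + 3 * t * ε + ε ^ 2 := by positivity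
    calc (t ^ 3 - (t + ε) ^ 3) ^ 2 = (ε * (3 * t ^ 2 + 3 * t * ε + ε ^ 2)) ^ 2 := by ring
    _ ≤ (ε * (3 * (t + ε) ^ 2)) ^ 2 := by
        apply pow_le_pow_left₀ (by positivity)
        exact mul_le_mul_of_nonneg_left e2 hε.le
    _ = 9 * ε ^ 2 * (t + ε) ^ 4 := by ring
  have h4t : 4 * (t * ε) ≤ (t + ε) ^ 2 := by nlinarith [sq_nonneg (t - ε)]
  calc t * (t ^ 3 - (t + ε) ^ 3) ^ 2 ≤ t * (9 * ε ^ 2 * (t + ε) ^ 4) :=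
      mul_le_mul_of_nonneg_left key ht
  _ = (9/4 * ε) * (t + ε) ^ 4 * (4 * (t * ε)) := by ring
  _ ≤ (9/4 * ε) * (t + ε) ^ 4 * (t + ε) ^ 2 :=
      mul_le_mul_of_nonneg_left h4t (by positivity)
  _ = 9/4 * ε * ((t + ε) ^ 3) ^ 2 := by ring



noncomputable def ufun (e t : ℝ) : ℝ := (max t 0) ^ (2/3 : ℝ) / (max t 0 + e)

lemma ufun_continuous {e : ℝ} (he : 0 < e) : Continuous (ufun e) := by
  apply Continuous.div
  · exact (continuous_id.max continuous_const).rpow_const (fun x => Or.inr (by norm_num))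
  · exact (continuous_id.max continuous_const).add continuous_const
  · intro t
    have : 0 ≤ max t 0 := le_max_right _ _
    positivity

lemma ufun_zero (e : ℝ) : ufun e 0 = 0 := by
  simp [ufun, Real.zero_rpow (by norm_num : (2/3 : ℝ) ≠ 0)]

lemma ufun_eq {e t : ℝ} (ht : 0 ≤ t) : ufun e t = t ^ (2/3 : ℝ) / (t + e) := by
  rw [ufun, max_eq_left ht]

noncomputable def qfun (e t : ℝ) : ℝ := ufun e t * (ufun e t * (t * ufun e t))

lemma qfun_continuous {e : ℝ} (he : 0 < e) : Continuous (qfun e) :=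
  (ufun_continuous he).mul ((ufun_continuous he).mul (continuous_id.mul (ufun_continuous he)))

lemma qfun_zero (e : ℝ) : qfun e 0 = 0 := by simp [qfun, ufun_zero]

lemma est1_abs {t e d : ℝ} (ht : 0 ≤ t) (he : 0 < e) (hd : 0 < d) :
    |(ufun e t - ufun d t) * (t * (ufun e t - ufun d t))| ≤ (max e d) ^ (1/3 : ℝ) := by
  have h1 : (ufun e t - ufun d t) * (t * (ufun e t - ufun d t))
      = t * (ufun e t - ufun d t) ^ 2 := by ring
  rw [h1, abs_of_nonneg (by positivity), ufun_eq ht, ufun_eq ht]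
  rcases le_total d e with h | h
  · rw [max_eq_left h]
    exact est1 ht hd h
  · rw [max_eq_right h]
    have h2 : (t ^ (2/3:ℝ) / (t + e) - t ^ (2/3:ℝ) / (t + d)) ^ 2
        = (t ^ (2/3:ℝ) / (t + d) - t ^ (2/3:ℝ) / (t + e)) ^ 2 := by ring
    rw [h2]
    exact est1 ht he h

lemma est2_abs {t e : ℝ} (ht : 0 ≤ t) (he : 0 < e) :
    |qfun e t * (t * qfun e t) - qfun e t * t - t * qfun e t + t| ≤ 9/4 * e := by
  have hq : qfun e t = t * (t ^ (2/3:ℝ) / (t + e)) ^ 3 := by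
    rw [qfun, ufun_eq ht]; ring
  have h1 : qfun e t * (t * qfun e t) - qfun e t * t - t * qfun e t + t
      = t * (qfun e t - 1) ^ 2 := by ring
  rw [h1, hq, abs_of_nonneg (by positivity)]
  exact est2 ht he

end estimates
end St16

open scoped RightActions

/-- Let `A` be a C*-algebra of adjointable operators on a Hilbert `B`-module `L`
(with adjoint assignment `adjA`), and let `F` be a closed linear subspace of adjointable
operators `L → E` (with adjoint assignment `adjF`) such that `F ∘ A ⊆ F` and `F* ∘ F ⊆ A`.
Then `F`, with the `A`-valued inner product `⟨ξ, η⟩ = ξ* ∘ η` and right action `ξ·a = ξ ∘ a`,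
is a Hilbert `A`-module whose Hilbert-module norm `‖⟨ξ,ξ⟩‖^{1/2}` coincides with the operator
norm, and `F = F ∘ F* ∘ F`. -/
theorem concrete_hilbert_module_norm_and_triple_factorization
    {B : Type*} [NonUnitalCStarAlgebra B] [PartialOrder B] [StarOrderedRing B]
    {L : Type*} [NormedAddCommGroup L] [NormedSpace ℂ L] [CompleteSpace L]
    [SMul Bᵐᵒᵖ L] [CStarModuleRight B L]
    {E : Type*} [NormedAddCommGroup E] [NormedSpace ℂ E] [CompleteSpace E]
    [SMul Bᵐᵒᵖ E] [CStarModuleRight B E]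
    (A : Set (L →L[ℂ] L)) (adjA : (L →L[ℂ] L) → (L →L[ℂ] L))
    (hA_closed : IsClosed A)
    (hA_add : ∀ a ∈ A, ∀ a' ∈ A, a + a' ∈ A)
    (hA_smul : ∀ (c : ℂ), ∀ a ∈ A, c • a ∈ A)
    (hA_mul : ∀ a ∈ A, ∀ a' ∈ A, a.comp a' ∈ A)
    (hadjA : ∀ a ∈ A, (∀ (x y : L), (inner B (a x) y : B) = inner B x (adjA a y)) ∧ adjA a ∈ A)
    (F : Set (L →L[ℂ] E)) (adjF : (L →L[ℂ] E) → (E →L[ℂ] L))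
    (hF_closed : IsClosed F)
    (hF_add : ∀ ξ ∈ F, ∀ η ∈ F, ξ + η ∈ F)
    (hF_smul : ∀ (c : ℂ), ∀ ξ ∈ F, c • ξ ∈ F)
    (hadjF : ∀ ξ ∈ F, ∀ (x : L) (y : E), (inner B (ξ x) y : B) = inner B x (adjF ξ y))
    (hFA : ∀ ξ ∈ F, ∀ a ∈ A, ξ.comp a ∈ F)
    (hFF : ∀ ξ ∈ F, ∀ η ∈ F, (adjF ξ).comp η ∈ A) :
    (∀ ξ ∈ F, ‖ξ‖ ^ 2 = ‖(adjF ξ).comp ξ‖) ∧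
    (∀ ξ ∈ F, ∃ ξ₁ ∈ F, ∃ ξ₂ ∈ F, ∃ ξ₃ ∈ F, ξ = ξ₁.comp ((adjF ξ₂).comp ξ₃)) ∧
    (∀ ξ₁ ∈ F, ∀ ξ₂ ∈ F, ∀ ξ₃ ∈ F, ξ₁.comp ((adjF ξ₂).comp ξ₃) ∈ F) := by
  have part3 : ∀ ξ₁ ∈ F, ∀ ξ₂ ∈ F, ∀ ξ₃ ∈ F, ξ₁.comp ((adjF ξ₂).comp ξ₃) ∈ F :=
    fun ξ₁ h₁ ξ₂ h₂ ξ₃ h₃ => hFA ξ₁ h₁ _ (hFF ξ₂ h₂ ξ₃ h₃)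
  refine ⟨fun ξ hξ => (show St16.IsAdjointPair B L E ξ (adjF ξ) from hadjF ξ hξ).norm_sq_eq,
    ?_, part3⟩
  intro ξ hξ
  have hp : St16.IsAdjointPair B L E ξ (adjF ξ) := hadjF ξ hξ
  set a0 : L →L[ℂ] L := (adjF ξ).comp ξ with ha0def
  have hpa : St16.IsAdjointPair B L L a0 a0 := hp.symm.comp hp
  set a : St16.Adj B L := ⟨a0, a0, hpa⟩ with hadef
  have ha : IsSelfAdjoint a := St16.Adj.ext' rfl
  have hapos : ∀ x : L, 0 ≤ (inner B x (a.T x) : B) := by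
    intro x
    have h1 : (inner B x (a.T x) : B) = inner B (ξ x) (ξ x) := by
      rw [show a.T x = (adjF ξ) (ξ x) from rfl, ← hadjF ξ hξ]
    rw [h1]
    exact CStarModuleRight.inner_self_nonneg
  have hσ := St16.Adj.quasispectrum_nonneg_of_inner ha hapos
  have hA_star : ∀ d : St16.Adj B L, d.T ∈ A → d.S ∈ A := by
    intro d hd
    have h1 : St16.IsAdjointPair B L L d.T (adjA d.T) := (hadjA d.T hd).1
    rw [d.adj.unique h1]
    exact (hadjA d.T hd).2
  have haT : a.T ∈ A := hFF ξ hξ ξ hξ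
  have hmem : ∀ f : ℝ → ℝ, Continuous f → f 0 = 0 → (cfcₙ f a).T ∈ A := fun f hf hf0 =>
    St16.Adj.cfcₙ_T_mem hA_closed hA_add hA_smul hA_mul hA_star ha haT f hf.continuousOn hf0
  set ε : ℕ → ℝ := fun n => 1 / ((n : ℝ) + 1) with hεdef
  have hεpos : ∀ n, 0 < ε n := fun n => by positivity
  have hεanti : ∀ m n : ℕ, m ≤ n → ε n ≤ ε m := by
    intro m n h
    have h1 : (m : ℝ) ≤ n := Nat.cast_le.mpr h
    apply one_div_le_one_div_of_le (by positivity)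
    linarith
  have hmul : ∀ (f g : ℝ → ℝ), Continuous f → f 0 = 0 → Continuous g → g 0 = 0 →
      cfcₙ (fun t => f t * g t) a = cfcₙ f a * cfcₙ g a := fun f g hf hf0 hg hg0 =>
    cfcₙ_mul f g a hf.continuousOn hf0 hg.continuousOn hg0
  have hid : cfcₙ (fun t : ℝ => t) a = a := cfcₙ_id' ℝ a
  set c : ℕ → St16.Adj B L := fun n => cfcₙ (St16.ufun (ε n)) a with hcdef
  have hcsa : ∀ n, IsSelfAdjoint (c n) := fun n => cfcₙ_predicate _ a
  set y : ℕ → (L →L[ℂ] E) := fun n => ξ.comp (c n).T with hydef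
  have hyF : ∀ n, y n ∈ F := fun n =>
    hFA ξ hξ _ (hmem _ (St16.ufun_continuous (hεpos n)) (St16.ufun_zero _))
  set S : ℕ → (E →L[ℂ] L) := fun n => (c n).S.comp (adjF ξ) with hSdef
  have hyp : ∀ n, St16.IsAdjointPair B L E (y n) (S n) := fun n => hp.comp (c n).adj
  have hdiff : ∀ n m : ℕ, ‖y n - y m‖ ^ 2 ≤ (max (ε n) (ε m)) ^ (1/3 : ℝ) := by
    intro n m
    have hpair := (hyp n).sub (hyp m)
    rw [hpair.norm_sq_eq]
    have hucont : Continuous (fun t => St16.ufun (ε n) t - St16.ufun (ε m) t) :=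
      (St16.ufun_continuous (hεpos n)).sub (St16.ufun_continuous (hεpos m))
    have hu0 : (fun t => St16.ufun (ε n) t - St16.ufun (ε m) t) 0 = 0 := by
      simp [St16.ufun_zero]
    have hd : c n - c m = cfcₙ (fun t => St16.ufun (ε n) t - St16.ufun (ε m) t) a := by
      rw [cfcₙ_sub _ _ a (St16.ufun_continuous (hεpos n)).continuousOn (St16.ufun_zero _)
        (St16.ufun_continuous (hεpos m)).continuousOn (St16.ufun_zero _)]
    have hdsa : IsSelfAdjoint (c n - c m) := (hcsa n).sub (hcsa m)
    have hcomp : (S n - S m).comp (y n - y m) = ((c n - c m) * (a * (c n - c m))).T := by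
      have hnm : (c n).S - (c m).S = (c n).T - (c m).T := by
        rw [St16.Adj.sa_S_eq_T (hcsa n), St16.Adj.sa_S_eq_T (hcsa m)]
      ext v
      simp only [hSdef, hydef, ContinuousLinearMap.coe_comp', Function.comp_apply,
        ContinuousLinearMap.coe_sub', Pi.sub_apply, St16.Adj.mul_T, St16.Adj.sub_T,
        hadef, ha0def]
      rw [show (c n).S = (c n).T from St16.Adj.sa_S_eq_T (hcsa n),
        show (c m).S = (c m).T from St16.Adj.sa_S_eq_T (hcsa m)]
      simp [map_sub]
    rw [hcomp, ← St16.Adj.norm_def]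
    have hq : (c n - c m) * (a * (c n - c m)) =
        cfcₙ (fun t => (St16.ufun (ε n) t - St16.ufun (ε m) t) *
          (t * (St16.ufun (ε n) t - St16.ufun (ε m) t))) a := by
      have e1 := hmul (fun t => St16.ufun (ε n) t - St16.ufun (ε m) t)
        (fun t => t * (St16.ufun (ε n) t - St16.ufun (ε m) t)) hucont hu0
        (continuous_id.mul hucont) (by simp [hu0])
      have e2 := hmul (fun t : ℝ => t) (fun t => St16.ufun (ε n) t - St16.ufun (ε m) t)
        continuous_id rfl hucont hu0
      rw [e1, e2, hid, ← hd]
    rw [hq]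
    apply norm_cfcₙ_le
    intro t ht
    rw [Real.norm_eq_abs]
    exact St16.est1_abs (hσ t ht) (hεpos n) (hεpos m)
  have hcauchy : CauchySeq y := by
    apply cauchySeq_of_le_tendsto_0 (fun N => Real.sqrt (ε N ^ (1/3 : ℝ)))
    · intro n m N hn hm
      rw [dist_eq_norm]
      have h2 : max (ε n) (ε m) ≤ ε N := max_le (hεanti N n hn) (hεanti N m hm)
      have h3 : ‖y n - y m‖ ^ 2 ≤ ε N ^ (1/3 : ℝ) :=
        (hdiff n m).trans (Real.rpow_le_rpow (le_max_of_le_left (hεpos n).le) h2 (by norm_num))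
      rw [show ‖y n - y m‖ = Real.sqrt (‖y n - y m‖ ^ 2) from (Real.sqrt_sq (norm_nonneg _)).symm]
      exact Real.sqrt_le_sqrt h3
    · have t1 : Filter.Tendsto ε Filter.atTop (nhds 0) := by
        exact tendsto_one_div_add_atTop_nhds_zero_nat
      have t2 : Filter.Tendsto (fun N => ε N ^ (1/3 : ℝ)) Filter.atTop (nhds 0) := by
        have h := t1.rpow_const (p := 1/3) (Or.inr (by norm_num))
        rwa [Real.zero_rpow (by norm_num)] at h
      have t3 := (Real.continuous_sqrt.tendsto 0).comp t2
      rwa [Real.sqrt_zero] at t3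
  obtain ⟨η, hη⟩ := cauchySeq_tendsto_of_complete hcauchy
  have hηF : η ∈ F := hF_closed.mem_of_tendsto hη (Filter.Eventually.of_forall hyF)
  have hScauchy : CauchySeq S := by
    rw [Metric.cauchySeq_iff] at hcauchy ⊢
    intro δ hδ
    obtain ⟨N, hN⟩ := hcauchy δ hδ
    refine ⟨N, fun m hm n hn => ?_⟩
    have h := hN m hm n hn
    rw [dist_eq_norm] at h ⊢
    rw [show S m - S n = (S m - S n) from rfl]
    calc ‖S m - S n‖ = ‖y m - y n‖ := ((hyp m).sub (hyp n)).norm_eq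
    _ < δ := h
  obtain ⟨SS, hSS⟩ := cauchySeq_tendsto_of_complete hScauchy
  have hSSpair : St16.IsAdjointPair B L E η SS := by
    intro x w
    have h1 : Filter.Tendsto (fun n => (inner B ((y n) x) w : B)) Filter.atTop
        (nhds (inner B (η x) w)) := by
      have he : Filter.Tendsto (fun n => (y n) x) Filter.atTop (nhds (η x)) :=
        ((ContinuousLinearMap.apply ℂ E x).continuous.tendsto _).comp hη
      exact (CStarModuleRight.continuous_inner.tendsto _).comp (he.prodMk_nhds tendsto_const_nhds)
    have h2 : Filter.Tendsto (fun n => (inner B x ((S n) w) : B)) Filter.atTop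
        (nhds (inner B x (SS w))) := by
      have he : Filter.Tendsto (fun n => (S n) w) Filter.atTop (nhds (SS w)) :=
        ((ContinuousLinearMap.apply ℂ L w).continuous.tendsto _).comp hSS
      exact (CStarModuleRight.continuous_inner.tendsto _).comp (tendsto_const_nhds.prodMk_nhds he)
    have heq : (fun n => (inner B ((y n) x) w : B)) = fun n => (inner B x ((S n) w) : B) :=
      funext fun n => (hyp n) x w
    rw [heq] at h1
    exact tendsto_nhds_unique h1 h2
  have hadjη : adjF η = SS :=
    St16.IsAdjointPair.unique (show St16.IsAdjointPair B L E η (adjF η) from hadjF η hηF) hSSpair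
  refine ⟨η, hηF, η, hηF, η, hηF, ?_⟩
  rw [hadjη]
  have htriple : Filter.Tendsto (fun n => (y n).comp ((S n).comp (y n))) Filter.atTop
      (nhds (η.comp (SS.comp η))) :=
    St16.tendsto_clm_comp hη (St16.tendsto_clm_comp hSS hη)
  set w : ℕ → St16.Adj B L := fun n => c n * (c n * (a * c n)) with hwdef
  have hw : ∀ n, w n = cfcₙ (St16.qfun (ε n)) a := by
    intro n
    have hcont := St16.ufun_continuous (hεpos n)
    have h0 := St16.ufun_zero (ε n)
    have e1 := hmul (St16.ufun (ε n))
      (fun t => St16.ufun (ε n) t * (t * St16.ufun (ε n) t)) hcont h0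
      (hcont.mul (continuous_id.mul hcont)) (by simp [h0])
    have e2 := hmul (St16.ufun (ε n)) (fun t => t * St16.ufun (ε n) t) hcont h0
      (continuous_id.mul hcont) (by simp [h0])
    have e3 := hmul (fun t : ℝ => t) (St16.ufun (ε n)) continuous_id rfl hcont h0
    have hqeq : St16.qfun (ε n) = fun t => St16.ufun (ε n) t *
        (St16.ufun (ε n) t * (t * St16.ufun (ε n) t)) := rfl
    rw [hwdef, hqeq, e1, e2, e3, hid]
  have hwsa : ∀ n, IsSelfAdjoint (w n) := fun n => (hw n) ▸ cfcₙ_predicate _ a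
  have hident : ∀ n, (y n).comp ((S n).comp (y n)) = ξ.comp (w n).T := by
    intro n
    ext v
    simp only [hydef, hSdef, hwdef, ContinuousLinearMap.coe_comp', Function.comp_apply,
      St16.Adj.mul_T, hadef, ha0def]
    rw [show (c n).S = (c n).T from St16.Adj.sa_S_eq_T (hcsa n)]
  have hbound : ∀ n, ‖ξ.comp (w n).T - ξ‖ ≤ Real.sqrt (9/4 * ε n) := by
    intro n
    have hqc := St16.qfun_continuous (hεpos n)
    have hq0 := St16.qfun_zero (ε n)
    have hpair : St16.IsAdjointPair B L E (ξ.comp (w n).T - ξ)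
        ((w n).T.comp (adjF ξ) - adjF ξ) := by
      have h1 : St16.IsAdjointPair B L E (ξ.comp (w n).T) ((w n).S.comp (adjF ξ)) :=
        hp.comp (w n).adj
      rw [St16.Adj.sa_S_eq_T (hwsa n)] at h1
      exact h1.sub hp
    have h2 : ‖ξ.comp (w n).T - ξ‖ ^ 2 ≤ 9/4 * ε n := by
      rw [hpair.norm_sq_eq]
      have hcomp2 : ((w n).T.comp (adjF ξ) - adjF ξ).comp (ξ.comp (w n).T - ξ)
          = (w n * (a * w n) - w n * a - a * w n + a).T := by
        ext v
        simp only [ContinuousLinearMap.coe_comp', Function.comp_apply,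
          ContinuousLinearMap.coe_sub', Pi.sub_apply, ContinuousLinearMap.add_apply,
          St16.Adj.mul_T, St16.Adj.sub_T, St16.Adj.add_T, hadef, ha0def]
        simp only [map_sub]
        abel
      rw [hcomp2, ← St16.Adj.norm_def]
      have e1 := hmul (St16.qfun (ε n)) (fun t => t * St16.qfun (ε n) t) hqc hq0
        (continuous_id.mul hqc) (by simp [hq0])
      have e2 := hmul (fun t : ℝ => t) (St16.qfun (ε n)) continuous_id rfl hqc hq0
      have e2' := hmul (St16.qfun (ε n)) (fun t : ℝ => t) hqc hq0 continuous_id rfl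
      have cf1 : Continuous (fun t => St16.qfun (ε n) t * (t * St16.qfun (ε n) t)) :=
        hqc.mul (continuous_id.mul hqc)
      have cf2 : Continuous (fun t => St16.qfun (ε n) t * t) := hqc.mul continuous_id
      have cf3 : Continuous (fun t => t * St16.qfun (ε n) t) := continuous_id.mul hqc
      have s1 : cfcₙ (fun t => St16.qfun (ε n) t * (t * St16.qfun (ε n) t)
            - St16.qfun (ε n) t * t) a
          = cfcₙ (fun t => St16.qfun (ε n) t * (t * St16.qfun (ε n) t)) a
            - cfcₙ (fun t => St16.qfun (ε n) t * t) a :=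
        cfcₙ_sub _ _ a cf1.continuousOn (by simp [hq0]) cf2.continuousOn (by simp [hq0])
      have s2 : cfcₙ (fun t => (St16.qfun (ε n) t * (t * St16.qfun (ε n) t)
            - St16.qfun (ε n) t * t) - t * St16.qfun (ε n) t) a
          = cfcₙ (fun t => St16.qfun (ε n) t * (t * St16.qfun (ε n) t)
            - St16.qfun (ε n) t * t) a - cfcₙ (fun t => t * St16.qfun (ε n) t) a :=
        cfcₙ_sub _ _ a (cf1.sub cf2).continuousOn (by simp [hq0]) cf3.continuousOn
          (by simp [hq0])
      have s3 : cfcₙ (fun t => ((St16.qfun (ε n) t * (t * St16.qfun (ε n) t)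
            - St16.qfun (ε n) t * t) - t * St16.qfun (ε n) t) + t) a
          = cfcₙ (fun t => (St16.qfun (ε n) t * (t * St16.qfun (ε n) t)
            - St16.qfun (ε n) t * t) - t * St16.qfun (ε n) t) a + cfcₙ (fun t : ℝ => t) a :=
        cfcₙ_add _ _ a ((cf1.sub cf2).sub cf3).continuousOn (by simp [hq0])
          continuous_id.continuousOn rfl
      have hz : w n * (a * w n) - w n * a - a * w n + a
          = cfcₙ (fun t => ((St16.qfun (ε n) t * (t * St16.qfun (ε n) t)
            - St16.qfun (ε n) t * t) - t * St16.qfun (ε n) t) + t) a := by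
        rw [s3, s2, s1, e1, e2, e2', hid, ← hw]
      rw [hz]
      apply norm_cfcₙ_le
      intro t ht
      rw [Real.norm_eq_abs]
      have := St16.est2_abs (hσ t ht) (hεpos n)
      calc |St16.qfun (ε n) t * (t * St16.qfun (ε n) t) - St16.qfun (ε n) t * t
          - t * St16.qfun (ε n) t + t| ≤ 9/4 * ε n := this
      _ = 9/4 * ε n := rfl
    rw [show ‖ξ.comp (w n).T - ξ‖ = Real.sqrt (‖ξ.comp (w n).T - ξ‖ ^ 2) from
      (Real.sqrt_sq (norm_nonneg _)).symm]
    exact Real.sqrt_le_sqrt h2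
  have hconv : Filter.Tendsto (fun n => ξ.comp (w n).T) Filter.atTop (nhds ξ) := by
    rw [← tendsto_sub_nhds_zero_iff]
    rw [tendsto_zero_iff_norm_tendsto_zero]
    apply squeeze_zero (fun n => norm_nonneg _) hbound
    have t1 : Filter.Tendsto ε Filter.atTop (nhds 0) := by
      exact tendsto_one_div_add_atTop_nhds_zero_nat
    have t2 : Filter.Tendsto (fun n => 9/4 * ε n) Filter.atTop (nhds 0) := by
      have h := t1.const_mul (9/4 : ℝ)
      rwa [mul_zero] at h
    have t3 := (Real.continuous_sqrt.tendsto 0).comp t2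
    rwa [Real.sqrt_zero] at t3
  exact (tendsto_nhds_unique (htriple.congr hident) hconv).symm
end

section
/- Let F ⊆ Adj(L, E) be an E-concrete Hilbert A-module and let D be the closed linear span of F ∘ F* in Adj(E). Then D is a C*-subalgebra of Adj(E), D is a closed two-sided *-ideal in M = {x ∈ Adj(E) : x∘F ⊆ F and x*∘F ⊆ F}, and the map determined by |ξ⟩⟨η| ↦ ξ ∘ η* extends to a *-isomorphism from the compact operators K(F) onto D. -/
open scoped RightActions

/-- The Hilbert C⋆-module class `CStarModule` as it stood in Mathlib of December 2024
(right `A`-action through `Aᵐᵒᵖ`, inner product `A`-linear on the right). -/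
class CStarModuleOld (A E : Type*) [NonUnitalSemiring A] [StarRing A] [Module ℂ A]
    [AddCommGroup E] [Module ℂ E] [PartialOrder A] [SMul Aᵐᵒᵖ E] [Norm A] [Norm E]
    extends Inner A E where
  inner_add_right {x} {y} {z} : inner x (y + z) = inner x y + inner x z
  inner_self_nonneg {x} : 0 ≤ inner x x
  inner_self {x} : inner x x = 0 ↔ x = 0
  inner_op_smul_right {a : A} {x y : E} : inner x (y <• a) = inner x y * a
  inner_smul_right_complex {z : ℂ} {x} {y} : inner x (z • y) = z • inner x y
  star_inner x y : star (inner x y) = inner y x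
  norm_eq_sqrt_norm_inner_self x : ‖x‖ = Real.sqrt ‖inner x x‖

namespace CStarModuleOld

variable {A E : Type*} [NonUnitalCStarAlgebra A] [PartialOrder A] [StarOrderedRing A]
  [NormedAddCommGroup E] [NormedSpace ℂ E] [SMul Aᵐᵒᵖ E] [CStarModuleOld A E]

lemma inner_add_left' {x y z : E} : inner A (x + y) z = inner A x z + inner A y z := by
  rw [← star_inner, inner_add_right, star_add, star_inner, star_inner]

lemma inner_sub_right {x y z : E} : inner A x (y - z) = inner A x y - inner A x z :=
  eq_sub_of_add_eq (by rw [← inner_add_right, sub_add_cancel])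

lemma inner_sub_left {x y z : E} : inner A (x - y) z = inner A x z - inner A y z :=
  eq_sub_of_add_eq (by rw [← inner_add_left', sub_add_cancel])

lemma inner_op_smul_left' {a : A} {x y : E} : inner A (x <• a) y = star a * inner A x y := by
  rw [← star_inner, inner_op_smul_right, star_mul, star_inner]

lemma inner_smul_left_complex' {z : ℂ} {x y : E} : inner A (z • x) y = star z • inner A x y := by
  rw [← star_inner, inner_smul_right_complex, star_smul, star_inner]

lemma norm_sq_eq {x : E} : ‖x‖ ^ 2 = ‖inner A x x‖ := by
  rw [norm_eq_sqrt_norm_inner_self (A := A) x, Real.sq_sqrt (norm_nonneg _)]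

lemma inner_zero_left' {y : E} : inner A (0 : E) y = 0 := by
  have h := inner_sub_left (A := A) (x := (0 : E)) (y := (0 : E)) (z := y)
  rwa [sub_self, sub_self] at h

lemma inner_zero_right' {y : E} : inner A y (0 : E) = 0 := by
  rw [← star_inner, inner_zero_left', star_zero]

attribute [simp] inner_sub_left inner_sub_right inner_add_left' inner_zero_left' inner_zero_right' inner_smul_left_complex'
  CStarModuleOld.inner_add_right CStarModuleOld.inner_smul_right_complex

variable (E) in
lemma norm_inner_le {x y : E} : ‖inner A x y‖ ≤ ‖x‖ * ‖y‖ := by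
  rcases eq_or_ne x 0 with h | h
  · simp [h, inner_zero_left']
  set s : ℝ := ‖x‖ ^ 2 with hs
  have hspos : 0 < s := by have := norm_pos_iff.mpr h; positivity
  set a : A := inner A x y with ha
  have hsa : star a = inner A y x := star_inner x y
  have hss : s = ‖inner A x x‖ := norm_sq_eq
  have hexp : inner A (x <• a - (s : ℂ) • y) (x <• a - (s : ℂ) • y)
      = star a * inner A x x * a - s • (star a * inner A x y) - s • (inner A y x * a)
        + s • s • inner A y y := by
    rw [inner_sub_left, inner_sub_right, inner_sub_right, inner_op_smul_left',
      inner_op_smul_left', inner_op_smul_right, inner_op_smul_right,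
      inner_smul_left_complex', inner_smul_left_complex', inner_smul_right_complex,
      inner_smul_right_complex, Complex.star_def, Complex.conj_ofReal, Complex.coe_smul,
      Complex.coe_smul, Complex.coe_smul, Complex.coe_smul, ← ha, hsa]
    simp only [mul_smul_comm, smul_mul_assoc, mul_assoc]
    abel
  have hle : star a * inner A x x * a ≤ s • (star a * a) := by
    rw [hss]; exact CStarAlgebra.star_left_conjugate_le_norm_smul (star_inner x x)
  have key : (0 : A) ≤ s • (s • inner A y y - star a * a) := by
    calc (0 : A) ≤ _ := inner_self_nonneg (x := x <• a - (s : ℂ) • y)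
      _ = _ := hexp
      _ ≤ s • (star a * a) - s • (star a * inner A x y) - s • (inner A y x * a)
        + s • s • inner A y y := by gcongr
      _ = s • (s • inner A y y - star a * a) := by
        rw [← ha, ← hsa, smul_sub]; abel
  have hP : star a * a ≤ s • inner A y y := by
    have : (0 : A) ≤ s • inner A y y - star a * a := by
      have h2 := smul_nonneg (inv_nonneg.mpr hspos.le) key
      rwa [inv_smul_smul₀ hspos.ne'] at h2
    exact sub_nonneg.mp this
  have h3 : ‖a‖ ^ 2 ≤ (‖x‖ * ‖y‖) ^ 2 := by
    calc ‖a‖ ^ 2 = ‖star a * a‖ := by rw [CStarRing.norm_star_mul_self, pow_two]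
      _ ≤ ‖s • inner A y y‖ :=
        CStarAlgebra.norm_le_norm_of_nonneg_of_le (star_mul_self_nonneg a) hP
      _ = s * ‖inner A y y‖ := by rw [norm_smul, Real.norm_eq_abs, abs_of_pos hspos]
      _ = (‖x‖ * ‖y‖) ^ 2 := by rw [← norm_sq_eq, hs]; ring
  exact (pow_le_pow_iff_left₀ (norm_nonneg _) (by positivity) two_ne_zero).mp h3

lemma continuous_inner : Continuous (fun x : E × E => inner A x.1 x.2) := by
  let f : E →L⋆[ℂ] E →L[ℂ] A := LinearMap.mkContinuous₂
    (LinearMap.mk₂'ₛₗ (starRingEnd ℂ) (RingHom.id ℂ) (fun x y : E => inner A x y)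
      (fun _ _ _ => inner_add_left') (fun _ _ _ => inner_smul_left_complex')
      (fun _ _ _ => inner_add_right) (fun _ _ _ => inner_smul_right_complex)) 1
    (fun x y => by simpa using norm_inner_le E (A := A) (x := x) (y := y))
  exact (f.continuous.comp continuous_fst).clm_apply continuous_snd

end CStarModuleOld

section helpers
variable {B : Type*} [NonUnitalCStarAlgebra B] [PartialOrder B] [StarOrderedRing B]
variable {E₁ E₂ : Type*}
  [NormedAddCommGroup E₁] [NormedSpace ℂ E₁] [SMul Bᵐᵒᵖ E₁] [CStarModuleOld B E₁]
  [NormedAddCommGroup E₂] [NormedSpace ℂ E₂] [SMul Bᵐᵒᵖ E₂] [CStarModuleOld B E₂]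

set_option linter.unusedSectionVars false

private lemma aux_ext_inner {u w : E₁} (h : ∀ a : E₁, (inner B a u : B) = inner B a w) :
    u = w := by
  have h1 : (inner B (u - w) (u - w) : B) = 0 := by
    rw [CStarModuleOld.inner_sub_right, h (u - w), sub_self]
  have h2 := CStarModuleOld.inner_self.mp h1
  rwa [sub_eq_zero] at h2

private lemma aux_adj_symm {T : E₁ →L[ℂ] E₂} {T' : E₂ →L[ℂ] E₁}
    (h : ∀ u v, (inner B (T u) v : B) = inner B u (T' v)) :
    ∀ u v, (inner B (T' u) v : B) = inner B u (T v) := by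
  intro u v
  calc (inner B (T' u) v : B) = star (inner B v (T' u) : B) := (CStarModuleOld.star_inner v (T' u)).symm
    _ = star (inner B (T v) u : B) := by rw [← h v u]
    _ = inner B u (T v) := CStarModuleOld.star_inner (T v) u

private lemma aux_adj_norm_le (T : E₁ →L[ℂ] E₂) (T' : E₂ →L[ℂ] E₁)
    (h : ∀ u v, (inner B (T u) v : B) = inner B u (T' v)) : ‖T'‖ ≤ ‖T‖ := by
  refine ContinuousLinearMap.opNorm_le_bound _ (norm_nonneg T) fun v => ?_
  have h1 : ‖T' v‖ ^ 2 = ‖(inner B (T' v) (T' v) : B)‖ := CStarModuleOld.norm_sq_eq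
  have h2 : (inner B (T' v) (T' v) : B) = inner B (T (T' v)) v := (h (T' v) v).symm
  have h3 : ‖(inner B (T (T' v)) v : B)‖ ≤ ‖T (T' v)‖ * ‖v‖ := CStarModuleOld.norm_inner_le E₂
  have h4 : ‖T (T' v)‖ ≤ ‖T‖ * ‖T' v‖ := T.le_opNorm _
  have h5 : ‖T' v‖ ^ 2 ≤ (‖T‖ * ‖v‖) * ‖T' v‖ := by
    rw [h1, h2]
    nlinarith [norm_nonneg (T' v), norm_nonneg v, norm_nonneg (T (T' v))]
  rcases eq_or_lt_of_le (norm_nonneg (T' v)) with h6 | h6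
  · rw [← h6]; positivity
  · nlinarith

private lemma aux_adj_norm_eq (T : E₁ →L[ℂ] E₂) (T' : E₂ →L[ℂ] E₁)
    (h : ∀ u v, (inner B (T u) v : B) = inner B u (T' v)) : ‖T'‖ = ‖T‖ :=
  le_antisymm (aux_adj_norm_le T T' h) (aux_adj_norm_le T' T (aux_adj_symm h))

private lemma aux_csq (T : E₁ →L[ℂ] E₂) (T' : E₂ →L[ℂ] E₁)
    (h : ∀ u v, (inner B (T u) v : B) = inner B u (T' v)) : ‖T‖ ^ 2 ≤ ‖T'.comp T‖ := by
  have key : ∀ u : E₁, ‖T u‖ ^ 2 ≤ ‖T'.comp T‖ * ‖u‖ ^ 2 := by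
    intro u
    have h1 : ‖T u‖ ^ 2 = ‖(inner B (T u) (T u) : B)‖ := CStarModuleOld.norm_sq_eq
    have h2 : (inner B (T u) (T u) : B) = inner B u (T' (T u)) := h u (T u)
    have h3 : ‖(inner B u (T' (T u)) : B)‖ ≤ ‖u‖ * ‖T' (T u)‖ := CStarModuleOld.norm_inner_le E₁
    have h4 : ‖T' (T u)‖ ≤ ‖T'.comp T‖ * ‖u‖ := (T'.comp T).le_opNorm u
    rw [h1, h2]
    nlinarith [norm_nonneg u, norm_nonneg (T' (T u))]
  have hT : ‖T‖ ≤ Real.sqrt ‖T'.comp T‖ := by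
    refine ContinuousLinearMap.opNorm_le_bound _ (Real.sqrt_nonneg _) fun u => ?_
    have h5 := key u
    have h6 : (Real.sqrt ‖T'.comp T‖ * ‖u‖) ^ 2 = ‖T'.comp T‖ * ‖u‖ ^ 2 := by
      rw [mul_pow, Real.sq_sqrt (norm_nonneg _)]
    refine (pow_le_pow_iff_left₀ (norm_nonneg _) (by positivity) (two_ne_zero)).mp ?_
    rw [h6]; exact h5
  calc ‖T‖ ^ 2 ≤ (Real.sqrt ‖T'.comp T‖) ^ 2 := pow_le_pow_left₀ (norm_nonneg _) hT 2
    _ = ‖T'.comp T‖ := Real.sq_sqrt (norm_nonneg _)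

private lemma aux_list_norm_sum {X : Type*} [SeminormedAddCommGroup X] (l : List X) :
    ‖l.sum‖ ≤ (l.map fun x => ‖x‖).sum := by
  induction l with
  | nil => simp
  | cons a l ih =>
    simp only [List.sum_cons, List.map_cons]
    exact (norm_add_le _ _).trans (by linarith)

private lemma aux_list_sum_mul {α R : Type*} [NonUnitalNonAssocSemiring R]
    (l : List α) (f : α → R) (z : R) :
    (l.map f).sum * z = (l.map fun a => f a * z).sum := by
  induction l with
  | nil => simp
  | cons a l ih => simp [add_mul, ih]

end helpers

set_option maxHeartbeats 2000000

/-- Let `F ⊆ Adj(L, E)` be an `E`-concrete Hilbert `A`-module and let `D` be the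
closed linear span of `F ∘ F*` in `Adj(E)`. Then `D` is a C*-subalgebra of `Adj(E)` which is a
closed two-sided *-ideal in `M = {x : x∘F ⊆ F and x*∘F ⊆ F}`, and the map `|ξ⟩⟨η| ↦ ξ ∘ η*`
extends to a *-isomorphism of the compact operators `K(F)` onto `D` (equivalently: `D` acts on
`F` by left composition injectively and isometrically, with the rank-one operators of `F`
corresponding exactly to the generators `ξ ∘ η*` of `D`). -/
theorem fixed_point_ideal_and_compacts
    {B : Type*} [NonUnitalCStarAlgebra B] [PartialOrder B] [StarOrderedRing B]
    {L : Type*} [NormedAddCommGroup L] [NormedSpace ℂ L] [CompleteSpace L]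
    [SMul Bᵐᵒᵖ L] [CStarModuleOld B L]
    {E : Type*} [NormedAddCommGroup E] [NormedSpace ℂ E] [CompleteSpace E]
    [SMul Bᵐᵒᵖ E] [CStarModuleOld B E]
    (A : Set (L →L[ℂ] L))
    (F : Set (L →L[ℂ] E)) (adjF : (L →L[ℂ] E) → (E →L[ℂ] L))
    (hF_closed : IsClosed F)
    (hF_add : ∀ ξ ∈ F, ∀ η ∈ F, ξ + η ∈ F)
    (hF_smul : ∀ (c : ℂ), ∀ ξ ∈ F, c • ξ ∈ F)
    (hadjF : ∀ ξ ∈ F, ∀ (x : L) (y : E), (inner B (ξ x) y : B) = inner B x (adjF ξ y))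
    (hFA : ∀ ξ ∈ F, ∀ a ∈ A, ξ.comp a ∈ F)
    (hFF : ∀ ξ ∈ F, ∀ η ∈ F, (adjF ξ).comp η ∈ A) :
    letI D : Set (E →L[ℂ] E) :=
      closure (Submodule.span ℂ
        {d : E →L[ℂ] E | ∃ ξ ∈ F, ∃ η ∈ F, d = ξ.comp (adjF η)} : Set (E →L[ℂ] E))
    letI M : Set (E →L[ℂ] E) :=
      {x : E →L[ℂ] E | ∃ y : E →L[ℂ] E,
        (∀ (u v : E), (inner B (x u) v : B) = inner B u (y v)) ∧
        (∀ ξ ∈ F, x.comp ξ ∈ F) ∧ (∀ ξ ∈ F, y.comp ξ ∈ F)}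
    -- `D` is a *-subalgebra (it is closed and a subspace by construction):
    (∀ d ∈ D, ∀ d' ∈ D, d.comp d' ∈ D) ∧
    (∀ d ∈ D, ∃ d' ∈ D, ∀ (u v : E), (inner B (d u) v : B) = inner B u (d' v)) ∧
    -- `D` is a two-sided ideal in `M`:
    (∀ x ∈ M, ∀ d ∈ D, x.comp d ∈ D ∧ d.comp x ∈ D) ∧
    -- the *-isomorphism `K(F) ≅ D`, realized by left composition on `F`,
    -- sends `|ξ⟩⟨η|` to `ξ ∘ η*`, is injective and isometric:
    (∀ ξ ∈ F, ∀ η ∈ F, ξ.comp (adjF η) ∈ D) ∧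
    (∀ d ∈ D, (∀ ξ ∈ F, d.comp ξ = 0) → d = 0) ∧
    (∀ d ∈ D, ‖d‖ = ⨆ ξ : {ξ : L →L[ℂ] E // ξ ∈ F ∧ ‖ξ‖ ≤ 1}, ‖d.comp ξ.1‖) := by
  classical
  set G : Set (E →L[ℂ] E) := {d : E →L[ℂ] E | ∃ ξ ∈ F, ∃ η ∈ F, d = ξ.comp (adjF η)}
    with hGdef
  set D : Set (E →L[ℂ] E) := closure (Submodule.span ℂ G : Set (E →L[ℂ] E)) with hDdef
  by_cases hne : F.Nonempty
  case neg =>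
    have hFe : F = ∅ := Set.not_nonempty_iff_eq_empty.mp hne
    have hGe : G = ∅ := by ext d; simp [hGdef, hFe]
    have hD : D = {0} := by
      rw [hDdef, hGe, Submodule.span_empty]
      simp
    have hmem : ∀ d ∈ D, d = 0 := by intro d hd; rw [hD] at hd; exact hd
    have h0D : (0 : E →L[ℂ] E) ∈ D := by rw [hD]; rfl
    refine ⟨?_, ?_, ?_, ?_, ?_, ?_⟩
    · intro d hd e he
      rw [hmem d hd, ContinuousLinearMap.zero_comp]
      exact h0D
    · intro d hd
      exact ⟨0, h0D, by simp [hmem d hd]⟩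
    · intro x hx d hd
      rw [hmem d hd]
      exact ⟨by rw [ContinuousLinearMap.comp_zero]; exact h0D,
        by rw [ContinuousLinearMap.zero_comp]; exact h0D⟩
    · intro ξ hξ; rw [hFe] at hξ; exact absurd hξ (Set.notMem_empty ξ)
    · intro d hd _; exact hmem d hd
    · intro d hd
      haveI : IsEmpty {ξ : L →L[ℂ] E // ξ ∈ F ∧ ‖ξ‖ ≤ 1} :=
        ⟨fun ξ => by
          obtain ⟨ξv, hξv, -⟩ := ξ
          rw [hFe] at hξv
          exact absurd hξv (Set.notMem_empty _)⟩
      rw [hmem d hd, Real.iSup_of_isEmpty]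
      simp
  case pos =>
  obtain ⟨ξ₀, hξ₀⟩ := hne
  have hF0 : (0 : L →L[ℂ] E) ∈ F := by simpa using hF_smul 0 ξ₀ hξ₀
  -- basic D facts
  have hGD : ∀ g ∈ G, g ∈ D := fun g hg => subset_closure (Submodule.subset_span hg)
  have hD0 : (0 : E →L[ℂ] E) ∈ D := subset_closure (Submodule.zero_mem _)
  have hDW : D = ((Submodule.span ℂ G).topologicalClosure : Set (E →L[ℂ] E)) :=
    (Submodule.topologicalClosure_coe _).symm
  have hD_add : ∀ a ∈ D, ∀ b ∈ D, a + b ∈ D := by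
    intro a ha b hb
    rw [hDW] at ha hb ⊢
    exact Submodule.add_mem _ ha hb
  have hD_smul : ∀ (c : ℂ), ∀ a ∈ D, c • a ∈ D := by
    intro c a ha
    rw [hDW] at ha ⊢
    exact Submodule.smul_mem _ c ha
  have hDclosed : IsClosed D := isClosed_closure
  -- continuity helpers
  have hcont_right : ∀ ξ : L →L[ℂ] E, Continuous fun d : E →L[ℂ] E => d.comp ξ := by
    intro ξ
    exact (((ContinuousLinearMap.compL ℂ L E E).flip ξ).continuous).congr fun d => rfl
  have hcont_rightE : ∀ x : E →L[ℂ] E, Continuous fun d : E →L[ℂ] E => d.comp x := by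
    intro x
    exact (((ContinuousLinearMap.compL ℂ E E E).flip x).continuous).congr fun d => rfl
  have hcont_left : ∀ x : E →L[ℂ] E, Continuous fun d : E →L[ℂ] E => x.comp d := by
    intro x
    exact ((ContinuousLinearMap.compL ℂ E E E x).continuous).congr fun d => rfl
  have hcont_apply : ∀ u : E, Continuous fun T : E →L[ℂ] E => T u := by
    intro u
    exact ((ContinuousLinearMap.apply ℂ E u).continuous).congr fun T => rfl
  have hcont_inner_left : ∀ v : E, Continuous fun w : E => (inner B w v : B) := fun v =>
    CStarModuleOld.continuous_inner.comp (continuous_id.prodMk continuous_const)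
  have hcont_inner_right : ∀ u : E, Continuous fun w : E => (inner B u w : B) := fun u =>
    CStarModuleOld.continuous_inner.comp (continuous_const.prodMk continuous_id)
  -- span induction principle for D
  have Dspan : ∀ (q : (E →L[ℂ] E) → Prop),
      (∀ g ∈ G, q g) → q 0 → (∀ a b, q a → q b → q (a + b)) →
      (∀ (c : ℂ) (a), q a → q (c • a)) → IsClosed {y : E →L[ℂ] E | q y} →
      ∀ d ∈ D, q d := by
    intro q hg h0 hadd hsmul hcl d hd
    refine closure_minimal ?_ hcl hd
    intro v hv
    exact Submodule.span_induction (p := fun x _ => q x) (fun x h => hg x h) h0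
      (fun a b _ _ ha hb => hadd a b ha hb) (fun c a _ ha => hsmul c a ha) hv
  -- D ∘ F ⊆ F
  have hDF : ∀ d ∈ D, ∀ ξ ∈ F, d.comp ξ ∈ F := by
    intro d hd ξ hξ
    refine Dspan (fun y => y.comp ξ ∈ F) ?_ ?_ ?_ ?_ ?_ d hd
    · rintro g ⟨ζ, hζ, η, hη, rfl⟩
      show (ζ.comp (adjF η)).comp ξ ∈ F
      rw [ContinuousLinearMap.comp_assoc]
      exact hFA ζ hζ _ (hFF η hη ξ hξ)
    · show (0 : E →L[ℂ] E).comp ξ ∈ F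
      rw [ContinuousLinearMap.zero_comp]; exact hF0
    · intro a b ha hb
      show (a + b).comp ξ ∈ F
      rw [ContinuousLinearMap.add_comp]; exact hF_add _ ha _ hb
    · intro c a ha
      show (c • a).comp ξ ∈ F
      rw [ContinuousLinearMap.smul_comp]; exact hF_smul c _ ha
    · exact hF_closed.preimage (hcont_right ξ)
  -- conjunct 1 : D closed under composition
  have hDcomp : ∀ d ∈ D, ∀ e ∈ D, d.comp e ∈ D := by
    intro d hd e he
    refine Dspan (fun y => d.comp y ∈ D) ?_ ?_ ?_ ?_ ?_ e he
    · rintro g ⟨ξ, hξ, η, hη, rfl⟩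
      show d.comp (ξ.comp (adjF η)) ∈ D
      rw [← ContinuousLinearMap.comp_assoc]
      exact hGD _ ⟨d.comp ξ, hDF d hd ξ hξ, η, hη, rfl⟩
    · show d.comp (0 : E →L[ℂ] E) ∈ D
      rw [ContinuousLinearMap.comp_zero]; exact hD0
    · intro a b ha hb
      show d.comp (a + b) ∈ D
      rw [ContinuousLinearMap.comp_add]; exact hD_add _ ha _ hb
    · intro c a ha
      show d.comp (c • a) ∈ D
      have hsc : d.comp (c • a) = c • d.comp a := by ext u; simp
      rw [hsc]; exact hD_smul c _ ha
    · exact hDclosed.preimage (hcont_left d)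
  -- adjoints of span elements
  have hVadj : ∀ v ∈ Submodule.span ℂ G,
      ∃ v' ∈ D, ∀ u w : E, (inner B (v u) w : B) = inner B u (v' w) := by
    intro v hv
    refine Submodule.span_induction
      (p := fun x _ => ∃ x' ∈ D, ∀ u w : E, (inner B (x u) w : B) = inner B u (x' w))
      ?_ ?_ ?_ ?_ hv
    · rintro g ⟨ξ, hξ, η, hη, rfl⟩
      refine ⟨η.comp (adjF ξ), hGD _ ⟨η, hη, ξ, hξ, rfl⟩, fun u w => ?_⟩
      calc (inner B ((ξ.comp (adjF η)) u) w : B) = inner B (ξ (adjF η u)) w := rfl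
        _ = inner B (adjF η u) (adjF ξ w) := hadjF ξ hξ _ _
        _ = inner B u (η (adjF ξ w)) := aux_adj_symm (hadjF η hη) u (adjF ξ w)
        _ = inner B u ((η.comp (adjF ξ)) w) := rfl
    · exact ⟨0, hD0, by simp⟩
    · rintro a b _ _ ⟨a', ha', hA⟩ ⟨b', hb', hB⟩
      refine ⟨a' + b', hD_add _ ha' _ hb', fun u w => ?_⟩
      simp [ContinuousLinearMap.add_apply, hA u w, hB u w]
    · rintro c a _ ⟨a', ha', hA⟩
      refine ⟨star c • a', hD_smul _ _ ha', fun u w => ?_⟩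
      simp [ContinuousLinearMap.smul_apply, hA u w]
  -- conjunct 2 : adjoints of elements of D
  have hDadj : ∀ d ∈ D, ∃ d' ∈ D, ∀ u w : E, (inner B (d u) w : B) = inner B u (d' w) := by
    intro d hd
    obtain ⟨f, hfmem, hftend⟩ := mem_closure_iff_seq_limit.mp hd
    choose g hg₁ hg₂ using fun n => hVadj (f n) (hfmem n)
    have hgc : CauchySeq g := by
      have hfc : CauchySeq f := hftend.cauchySeq
      rw [Metric.cauchySeq_iff] at hfc ⊢
      intro ε hε
      obtain ⟨N, hN⟩ := hfc ε hε
      refine ⟨N, fun m hm n hn => ?_⟩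
      have hle : ‖g m - g n‖ ≤ ‖f m - f n‖ := by
        refine aux_adj_norm_le (B := B) (f m - f n) (g m - g n) fun u w => ?_
        simp [ContinuousLinearMap.sub_apply, hg₂ m u w, hg₂ n u w]
      calc dist (g m) (g n) = ‖g m - g n‖ := dist_eq_norm _ _
        _ ≤ ‖f m - f n‖ := hle
        _ = dist (f m) (f n) := (dist_eq_norm _ _).symm
        _ < ε := hN m hm n hn
    obtain ⟨y, hy⟩ := cauchySeq_tendsto_of_complete hgc
    refine ⟨y, ?_, fun u w => ?_⟩
    · exact hDclosed.mem_of_tendsto hy (Filter.Eventually.of_forall hg₁)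
    · have hfu : Filter.Tendsto (fun n => f n u) Filter.atTop (nhds (d u)) :=
        ((hcont_apply u).tendsto d).comp hftend
      have h1 : Filter.Tendsto (fun n => (inner B (f n u) w : B)) Filter.atTop
          (nhds (inner B (d u) w : B)) := ((hcont_inner_left w).tendsto (d u)).comp hfu
      have hgw : Filter.Tendsto (fun n => g n w) Filter.atTop (nhds (y w)) :=
        ((hcont_apply w).tendsto y).comp hy
      have h2 : Filter.Tendsto (fun n => (inner B u (g n w) : B)) Filter.atTop
          (nhds (inner B u (y w) : B)) := ((hcont_inner_right u).tendsto (y w)).comp hgw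
      have heq : (fun n => (inner B (f n u) w : B)) = fun n => (inner B u (g n w) : B) :=
        funext fun n => hg₂ n u w
      rw [heq] at h1
      exact tendsto_nhds_unique h1 h2
  -- conjunct 3 : ideal property
  have hideal : ∀ x ∈ {x : E →L[ℂ] E | ∃ y : E →L[ℂ] E,
      (∀ (u v : E), (inner B (x u) v : B) = inner B u (y v)) ∧
      (∀ ξ ∈ F, x.comp ξ ∈ F) ∧ (∀ ξ ∈ F, y.comp ξ ∈ F)},
      ∀ d ∈ D, x.comp d ∈ D ∧ d.comp x ∈ D := by
    rintro x ⟨y, hxy, hxF, hyF⟩ d hd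
    constructor
    · refine Dspan (fun e => x.comp e ∈ D) ?_ ?_ ?_ ?_ ?_ d hd
      · rintro g ⟨ξ, hξ, η, hη, rfl⟩
        show x.comp (ξ.comp (adjF η)) ∈ D
        rw [← ContinuousLinearMap.comp_assoc]
        exact hGD _ ⟨x.comp ξ, hxF ξ hξ, η, hη, rfl⟩
      · show x.comp (0 : E →L[ℂ] E) ∈ D
        rw [ContinuousLinearMap.comp_zero]; exact hD0
      · intro a b ha hb
        show x.comp (a + b) ∈ D
        rw [ContinuousLinearMap.comp_add]; exact hD_add _ ha _ hb
      · intro c a ha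
        show x.comp (c • a) ∈ D
        have hsc : x.comp (c • a) = c • x.comp a := by ext u; simp
        rw [hsc]; exact hD_smul c _ ha
      · exact hDclosed.preimage (hcont_left x)
    · refine Dspan (fun e => e.comp x ∈ D) ?_ ?_ ?_ ?_ ?_ d hd
      · rintro g ⟨ξ, hξ, η, hη, rfl⟩
        show (ξ.comp (adjF η)).comp x ∈ D
        have hyη : y.comp η ∈ F := hyF η hη
        have key : (adjF η).comp x = adjF (y.comp η) := by
          ext w
          refine aux_ext_inner (B := B) fun a => ?_
          calc (inner B a (((adjF η).comp x) w) : B) = inner B a (adjF η (x w)) := rfl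
            _ = inner B (η a) (x w) := (hadjF η hη a (x w)).symm
            _ = star (inner B (x w) (η a) : B) := (CStarModuleOld.star_inner _ _).symm
            _ = star (inner B w (y (η a)) : B) := by rw [hxy w (η a)]
            _ = inner B (y (η a)) w := CStarModuleOld.star_inner _ _
            _ = inner B ((y.comp η) a) w := rfl
            _ = inner B a (adjF (y.comp η) w) := hadjF _ hyη a w
        rw [ContinuousLinearMap.comp_assoc, key]
        exact hGD _ ⟨ξ, hξ, y.comp η, hyη, rfl⟩
      · show (0 : E →L[ℂ] E).comp x ∈ D
        rw [ContinuousLinearMap.zero_comp]; exact hD0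
      · intro a b ha hb
        show (a + b).comp x ∈ D
        rw [ContinuousLinearMap.add_comp]; exact hD_add _ ha _ hb
      · intro c a ha
        show (c • a).comp x ∈ D
        rw [ContinuousLinearMap.smul_comp]; exact hD_smul c _ ha
      · exact hDclosed.preimage (hcont_rightE x)
  -- representation of span elements as lists of generators
  have hrep : ∀ v ∈ Submodule.span ℂ G, ∃ l : List ((L →L[ℂ] E) × (L →L[ℂ] E)),
      (∀ p ∈ l, p.1 ∈ F ∧ p.2 ∈ F) ∧
      v = (l.map fun p => p.1.comp (adjF p.2)).sum := by
    intro v hv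
    refine Submodule.span_induction (p := fun x _ => ∃ l : List ((L →L[ℂ] E) × (L →L[ℂ] E)),
      (∀ p ∈ l, p.1 ∈ F ∧ p.2 ∈ F) ∧
      x = (l.map fun p => p.1.comp (adjF p.2)).sum) ?_ ?_ ?_ ?_ hv
    · rintro g ⟨ξ, hξ, η, hη, rfl⟩
      exact ⟨[(ξ, η)], by simp [hξ, hη], by simp⟩
    · exact ⟨[], by simp, by simp⟩
    · rintro a b _ _ ⟨la, hla, rfl⟩ ⟨lb, hlb, rfl⟩
      exact ⟨la ++ lb, fun p hp => (List.mem_append.mp hp).elim (hla p) (hlb p), by simp⟩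
    · rintro c a _ ⟨la, hla, rfl⟩
      refine ⟨la.map fun p => (c • p.1, p.2), ?_, ?_⟩
      · rintro p hp
        obtain ⟨q, hq, rfl⟩ := List.mem_map.mp hp
        exact ⟨hF_smul c _ (hla q hq).1, (hla q hq).2⟩
      · have hind : ∀ lz : List ((L →L[ℂ] E) × (L →L[ℂ] E)),
            c • (lz.map fun p => p.1.comp (adjF p.2)).sum =
              ((lz.map fun p => ((c • p.1 : L →L[ℂ] E), p.2)).map
                fun p => p.1.comp (adjF p.2)).sum := by
          intro lz
          induction lz with
          | nil => simp
          | cons a lz ih =>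
            simp only [List.map_cons, List.sum_cons, smul_add, ih,
              ContinuousLinearMap.smul_comp]
        exact hind la
  -- the sup functional
  haveI hIdx : Nonempty {ξ : L →L[ℂ] E // ξ ∈ F ∧ ‖ξ‖ ≤ 1} :=
    ⟨⟨0, hF0, by simp⟩⟩
  set Sd : (E →L[ℂ] E) → ℝ :=
    fun d => ⨆ ξ : {ξ : L →L[ℂ] E // ξ ∈ F ∧ ‖ξ‖ ≤ 1}, ‖d.comp ξ.1‖ with hSdef
  have hbdd : ∀ d : E →L[ℂ] E,
      BddAbove (Set.range fun ξ : {ξ : L →L[ℂ] E // ξ ∈ F ∧ ‖ξ‖ ≤ 1} => ‖d.comp ξ.1‖) := by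
    intro d
    refine ⟨‖d‖, ?_⟩
    rintro r ⟨ξ, rfl⟩
    calc ‖d.comp ξ.1‖ ≤ ‖d‖ * ‖ξ.1‖ := ContinuousLinearMap.opNorm_comp_le _ _
      _ ≤ ‖d‖ * 1 := mul_le_mul_of_nonneg_left ξ.2.2 (norm_nonneg d)
      _ = ‖d‖ := mul_one _
  have hS_le : ∀ d : E →L[ℂ] E, Sd d ≤ ‖d‖ := by
    intro d
    refine ciSup_le fun ξ => ?_
    calc ‖d.comp ξ.1‖ ≤ ‖d‖ * ‖ξ.1‖ := ContinuousLinearMap.opNorm_comp_le _ _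
      _ ≤ ‖d‖ * 1 := mul_le_mul_of_nonneg_left ξ.2.2 (norm_nonneg d)
      _ = ‖d‖ := mul_one _
  have hS_nonneg : ∀ d : E →L[ℂ] E, 0 ≤ Sd d := by
    intro d
    have h1 : ‖d.comp (0 : L →L[ℂ] E)‖ ≤ Sd d :=
      le_ciSup (hbdd d) (⟨0, hF0, by simp⟩ : {ξ : L →L[ℂ] E // ξ ∈ F ∧ ‖ξ‖ ≤ 1})
    calc (0 : ℝ) = ‖d.comp (0 : L →L[ℂ] E)‖ := by rw [ContinuousLinearMap.comp_zero, norm_zero]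
      _ ≤ Sd d := h1
  have hS_bound : ∀ (d : E →L[ℂ] E), ∀ ζ ∈ F, ‖d.comp ζ‖ ≤ Sd d * ‖ζ‖ := by
    intro d ζ hζ
    by_cases h0 : ζ = 0
    · simp [h0]
    · have hn : 0 < ‖ζ‖ := norm_pos_iff.mpr h0
      have hmem : ((‖ζ‖⁻¹ : ℝ) : ℂ) • ζ ∈ F := hF_smul _ _ hζ
      have hns := norm_smul (α := ℂ) (β := L →L[ℂ] E) ((‖ζ‖⁻¹ : ℝ) : ℂ) ζ
      have hnorm : ‖((‖ζ‖⁻¹ : ℝ) : ℂ) • ζ‖ = 1 := by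
        rw [hns, Complex.norm_real, Real.norm_eq_abs, abs_of_pos (inv_pos.mpr hn),
          inv_mul_cancel₀ hn.ne']
      have hcompeq : d.comp ((((‖ζ‖⁻¹ : ℝ) : ℂ)) • ζ) = (((‖ζ‖⁻¹ : ℝ) : ℂ)) • d.comp ζ := by
        ext u; simp
      have hle : ‖d.comp ((((‖ζ‖⁻¹ : ℝ) : ℂ)) • ζ)‖ ≤ Sd d :=
        le_ciSup (hbdd d) (⟨_, hmem, hnorm.le⟩ : {ξ : L →L[ℂ] E // ξ ∈ F ∧ ‖ξ‖ ≤ 1})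
      have hns2 := norm_smul (α := ℂ) (β := L →L[ℂ] E) ((‖ζ‖⁻¹ : ℝ) : ℂ) (d.comp ζ)
      rw [hcompeq, hns2, Complex.norm_real, Real.norm_eq_abs,
        abs_of_pos (inv_pos.mpr hn)] at hle
      calc ‖d.comp ζ‖ = ‖ζ‖ * (‖ζ‖⁻¹ * ‖d.comp ζ‖) := by field_simp
        _ ≤ ‖ζ‖ * Sd d := mul_le_mul_of_nonneg_left hle hn.le
        _ = Sd d * ‖ζ‖ := mul_comm _ _
  -- S of adjoint
  have hSadj : ∀ d ∈ D, ∀ d' ∈ D,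
      (∀ u v : E, (inner B (d u) v : B) = inner B u (d' v)) → Sd d' ≤ Sd d := by
    intro d hd d' hd' hpair
    refine ciSup_le fun ξ => ?_
    have hζF : d'.comp ξ.1 ∈ F := hDF d' hd' ξ.1 ξ.2.1
    set ζ := d'.comp ξ.1 with hζ
    by_cases hz : ‖ζ‖ = 0
    · rw [hz]; exact hS_nonneg d
    · have hzpos : 0 < ‖ζ‖ := lt_of_le_of_ne (norm_nonneg ζ) (Ne.symm hz)
      have h1 : ‖ζ‖ ^ 2 ≤ ‖(adjF ζ).comp ζ‖ := aux_csq ζ (adjF ζ) (hadjF ζ hζF)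
      have h4 : ‖(adjF ζ).comp d'‖ ≤ ‖d.comp ζ‖ := by
        refine aux_adj_norm_le (B := B) (d.comp ζ) ((adjF ζ).comp d') fun a v => ?_
        calc (inner B ((d.comp ζ) a) v : B) = inner B (d (ζ a)) v := rfl
          _ = inner B (ζ a) (d' v) := hpair _ _
          _ = inner B a (adjF ζ (d' v)) := hadjF ζ hζF a (d' v)
          _ = inner B a (((adjF ζ).comp d') v) := rfl
      have h5 : ‖d.comp ζ‖ ≤ Sd d * ‖ζ‖ := hS_bound d ζ hζF
      have h2 : (adjF ζ).comp ζ = ((adjF ζ).comp d').comp ξ.1 := by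
        rw [ContinuousLinearMap.comp_assoc]
      have h3 : ‖((adjF ζ).comp d').comp ξ.1‖ ≤ ‖(adjF ζ).comp d'‖ := by
        calc ‖((adjF ζ).comp d').comp ξ.1‖ ≤ ‖(adjF ζ).comp d'‖ * ‖ξ.1‖ :=
              ContinuousLinearMap.opNorm_comp_le _ _
          _ ≤ ‖(adjF ζ).comp d'‖ * 1 := mul_le_mul_of_nonneg_left ξ.2.2 (norm_nonneg _)
          _ = _ := mul_one _
      have h6 : ‖ζ‖ ^ 2 ≤ Sd d * ‖ζ‖ := by
        calc ‖ζ‖ ^ 2 ≤ ‖(adjF ζ).comp ζ‖ := h1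
          _ = ‖((adjF ζ).comp d').comp ξ.1‖ := by rw [h2]
          _ ≤ ‖(adjF ζ).comp d'‖ := h3
          _ ≤ ‖d.comp ζ‖ := h4
          _ ≤ Sd d * ‖ζ‖ := h5
      nlinarith
  -- key : selfadjoint elements of D satisfy ‖x‖ ≤ Sd x
  have hkey : ∀ x ∈ D, (∀ u v : E, (inner B (x u) v : B) = inner B u (x v)) → ‖x‖ ≤ Sd x := by
    intro x hx hsa
    by_contra hcon
    push_neg at hcon
    set σ := Sd x with hσdef
    set t := ‖x‖ with htdef
    have ht : 0 < t := lt_of_le_of_lt (hS_nonneg x) hcon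
    have hσ0 : 0 ≤ σ := hS_nonneg x
    have hpow_sa : ∀ m : ℕ, ∀ u v : E, (inner B ((x ^ m) u) v : B) = inner B u ((x ^ m) v) := by
      intro m
      induction m with
      | zero => intro u v; simp
      | succ m ih =>
        intro u v
        have e1 : (x ^ (m + 1)) u = (x ^ m) (x u) := by
          rw [pow_succ, ContinuousLinearMap.mul_apply]
        have e2 : (x ^ (m + 1)) v = x ((x ^ m) v) := by
          rw [pow_succ', ContinuousLinearMap.mul_apply]
        rw [e1, e2]
        calc (inner B ((x ^ m) (x u)) v : B) = inner B (x u) ((x ^ m) v) := ih _ _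
          _ = inner B u (x ((x ^ m) v)) := hsa _ _
    have hpow_low : ∀ n : ℕ, t ^ (2 ^ n) ≤ ‖x ^ (2 ^ n)‖ := by
      intro n
      induction n with
      | zero =>
        have e0 : t ^ (2 ^ 0) = t := pow_one t
        have e1 : x ^ (2 ^ 0) = x := pow_one x
        rw [e0, e1]
      | succ n ih =>
        have h2 : (2 : ℕ) ^ (n + 1) = 2 ^ n + 2 ^ n := by ring
        have hcs : ‖x ^ (2 ^ n)‖ ^ 2 ≤ ‖(x ^ (2 ^ n)).comp (x ^ (2 ^ n))‖ :=
          aux_csq (x ^ (2 ^ n)) (x ^ (2 ^ n)) (hpow_sa _)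
        have hc : (x ^ (2 ^ n)).comp (x ^ (2 ^ n)) = x ^ (2 ^ (n + 1)) := by
          rw [h2, pow_add, ContinuousLinearMap.mul_def]
        have hts : t ^ (2 ^ (n + 1)) = (t ^ (2 ^ n)) ^ 2 := by
          rw [← pow_mul]
          congr 1
          try ring
        calc t ^ (2 ^ (n + 1)) = (t ^ (2 ^ n)) ^ 2 := hts
          _ ≤ ‖x ^ (2 ^ n)‖ ^ 2 := pow_le_pow_left₀ (by positivity) ih 2
          _ ≤ ‖(x ^ (2 ^ n)).comp (x ^ (2 ^ n))‖ := hcs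
          _ = ‖x ^ (2 ^ (n + 1))‖ := by rw [hc]
    have hpow_S : ∀ m : ℕ, ∀ ζ ∈ F, ‖(x ^ m).comp ζ‖ ≤ σ ^ m * ‖ζ‖ := by
      intro m
      induction m with
      | zero =>
        intro ζ hζ
        have e : (x ^ 0).comp ζ = ζ := by
          rw [pow_zero, ContinuousLinearMap.one_def, ContinuousLinearMap.id_comp]
        rw [e, pow_zero, one_mul]
      | succ m ih =>
        intro ζ hζ
        have hxζ : x.comp ζ ∈ F := hDF x hx ζ hζ
        have e1 : (x ^ (m + 1)).comp ζ = (x ^ m).comp (x.comp ζ) := by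
          rw [pow_succ, ContinuousLinearMap.mul_def, ContinuousLinearMap.comp_assoc]
        rw [e1]
        calc ‖(x ^ m).comp (x.comp ζ)‖ ≤ σ ^ m * ‖x.comp ζ‖ := ih _ hxζ
          _ ≤ σ ^ m * (σ * ‖ζ‖) := mul_le_mul_of_nonneg_left (hS_bound x ζ hζ) (by positivity)
          _ = σ ^ (m + 1) * ‖ζ‖ := by ring
    have hxm_norm : ∀ m : ℕ, ‖x ^ m‖ ≤ t ^ m := by
      intro m
      induction m with
      | zero =>
        rw [pow_zero, pow_zero, ContinuousLinearMap.one_def]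
        exact ContinuousLinearMap.norm_id_le
      | succ m ih =>
        calc ‖x ^ (m + 1)‖ = ‖x * x ^ m‖ := by rw [pow_succ']
          _ ≤ ‖x‖ * ‖x ^ m‖ := norm_mul_le _ _
          _ ≤ t * t ^ m := mul_le_mul_of_nonneg_left ih (norm_nonneg x)
          _ = t ^ (m + 1) := (pow_succ' t m).symm
    obtain ⟨s, hsV, hsx⟩ := Metric.mem_closure_iff.mp hx (t / 2) (by positivity)
    obtain ⟨l, hlF, hsrep⟩ := hrep s hsV
    set C : ℝ := (l.map fun p => ‖p.1‖ * ‖p.2‖).sum with hCdef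
    have hC0 : 0 ≤ C := by
      rw [hCdef]
      refine List.sum_nonneg ?_
      rintro r hr
      obtain ⟨p, hp, rfl⟩ := List.mem_map.mp hr
      positivity
    have hxs : ‖x - s‖ ≤ t / 2 := by rw [← dist_eq_norm]; exact hsx.le
    have hmain : ∀ m : ℕ, ‖x ^ (m + 1)‖ ≤ C * σ ^ m + t / 2 * t ^ m := by
      intro m
      have hadd : s + (x - s) = x := by abel
      have hsplit : x ^ (m + 1) = s * x ^ m + (x - s) * x ^ m := by
        rw [pow_succ']
        nth_rewrite 1 [← hadd]
        rw [add_mul]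
      have hterm : ∀ p : (L →L[ℂ] E) × (L →L[ℂ] E), p ∈ l →
          ‖(p.1.comp (adjF p.2)) * x ^ m‖ ≤ ‖p.1‖ * ‖p.2‖ * σ ^ m := by
        intro p hp
        have hp1 := (hlF p hp).1
        have hp2 := (hlF p hp).2
        have hadj_bound : ‖(adjF p.2).comp (x ^ m)‖ ≤ σ ^ m * ‖p.2‖ := by
          have hpair : ∀ (a : L) (v : E),
              (inner B (((x ^ m).comp p.2) a) v : B) = inner B a (((adjF p.2).comp (x ^ m)) v) := by
            intro a v
            calc (inner B ((x ^ m) (p.2 a)) v : B) = inner B (p.2 a) ((x ^ m) v) := hpow_sa m _ _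
              _ = inner B a (adjF p.2 ((x ^ m) v)) := hadjF p.2 hp2 _ _
          calc ‖(adjF p.2).comp (x ^ m)‖ ≤ ‖(x ^ m).comp p.2‖ := aux_adj_norm_le _ _ hpair
            _ ≤ σ ^ m * ‖p.2‖ := hpow_S m p.2 hp2
        calc ‖(p.1.comp (adjF p.2)) * x ^ m‖
            = ‖p.1.comp ((adjF p.2).comp (x ^ m))‖ := by
              rw [ContinuousLinearMap.mul_def, ContinuousLinearMap.comp_assoc]
          _ ≤ ‖p.1‖ * ‖(adjF p.2).comp (x ^ m)‖ := ContinuousLinearMap.opNorm_comp_le _ _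
          _ ≤ ‖p.1‖ * (σ ^ m * ‖p.2‖) := mul_le_mul_of_nonneg_left hadj_bound (norm_nonneg _)
          _ = ‖p.1‖ * ‖p.2‖ * σ ^ m := by ring
      have h1 : ‖s * x ^ m‖ ≤ C * σ ^ m := by
        have hmul : s * x ^ m = (l.map fun p => (p.1.comp (adjF p.2)) * x ^ m).sum := by
          rw [hsrep, aux_list_sum_mul]
        rw [hmul]
        calc ‖(l.map fun p => (p.1.comp (adjF p.2)) * x ^ m).sum‖
            ≤ ((l.map fun p => (p.1.comp (adjF p.2)) * x ^ m).map fun z => ‖z‖).sum :=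
              aux_list_norm_sum _
          _ = (l.map fun p => ‖(p.1.comp (adjF p.2)) * x ^ m‖).sum := by
              rw [List.map_map]; rfl
          _ ≤ (l.map fun p => ‖p.1‖ * ‖p.2‖ * σ ^ m).sum := List.sum_le_sum hterm
          _ = C * σ ^ m := by rw [hCdef, aux_list_sum_mul]
      have h2 : ‖(x - s) * x ^ m‖ ≤ t / 2 * t ^ m := by
        calc ‖(x - s) * x ^ m‖ ≤ ‖x - s‖ * ‖x ^ m‖ := norm_mul_le _ _
          _ ≤ t / 2 * t ^ m :=
            mul_le_mul hxs (hxm_norm m) (norm_nonneg _) (by positivity)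
      calc ‖x ^ (m + 1)‖ = ‖s * x ^ m + (x - s) * x ^ m‖ := by rw [← hsplit]
        _ ≤ ‖s * x ^ m‖ + ‖(x - s) * x ^ m‖ := norm_add_le _ _
        _ ≤ C * σ ^ m + t / 2 * t ^ m := add_le_add h1 h2
    by_cases hσ : σ = 0
    · have h1 := hmain 1
      have h2 := hpow_low 1
      rw [hσ] at h1
      norm_num at h1 h2
      nlinarith
    · have hσpos : 0 < σ := lt_of_le_of_ne hσ0 (Ne.symm hσ)
      have hr : 1 < t / σ := (one_lt_div hσpos).mpr hcon
      obtain ⟨k, hk⟩ := pow_unbounded_of_one_lt (2 * C / t) hr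
      have hk1 : k ≤ 2 ^ k - 1 := by
        have := @Nat.lt_two_pow_self k
        omega
      set m := 2 ^ k - 1 with hmdef
      have hm1 : m + 1 = 2 ^ k := by
        have h2k : 1 ≤ 2 ^ k := Nat.one_le_two_pow
        omega
      have h1 : t ^ (m + 1) ≤ ‖x ^ (m + 1)‖ := by rw [hm1]; exact hpow_low k
      have h2 := hmain m
      have h3 : t / 2 * t ^ m ≤ C * σ ^ m := by
        rw [pow_succ'] at h1
        nlinarith [h1, h2]
      have h4 : 2 * C / t < (t / σ) ^ m := by
        calc 2 * C / t < (t / σ) ^ k := hk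
          _ ≤ (t / σ) ^ m := pow_le_pow_right₀ hr.le hk1
      have h5 : (t / σ) ^ m ≤ 2 * C / t := by
        rw [div_pow, div_le_div_iff₀ (by positivity) ht]
        nlinarith [h3]
      linarith
  -- isometry
  have hiso : ∀ d ∈ D, ‖d‖ = Sd d := by
    intro d hd
    refine le_antisymm ?_ (hS_le d)
    obtain ⟨d', hd', hpair⟩ := hDadj d hd
    have hpair' : ∀ u v : E, (inner B (d' u) v : B) = inner B u (d v) := aux_adj_symm hpair
    have hxD : d.comp d' ∈ D := hDcomp d hd d' hd'
    have hsa : ∀ u v : E, (inner B ((d.comp d') u) v : B) = inner B u ((d.comp d') v) := by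
      intro u v
      calc (inner B (d (d' u)) v : B) = inner B (d' u) (d' v) := hpair _ _
        _ = inner B u (d (d' v)) := hpair' _ _
    have h1 : ‖d‖ ^ 2 ≤ ‖d.comp d'‖ := by
      have hcs := aux_csq d' d hpair'
      have heq : ‖d‖ = ‖d'‖ := (aux_adj_norm_eq d d' hpair).symm
      rw [heq]; exact hcs
    have h2 : ‖d.comp d'‖ ≤ Sd (d.comp d') := hkey _ hxD hsa
    have h3 : Sd (d.comp d') ≤ Sd d * Sd d' := by
      refine ciSup_le fun ξ => ?_
      have hzF : d'.comp ξ.1 ∈ F := hDF d' hd' ξ.1 ξ.2.1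
      have e : (d.comp d').comp ξ.1 = d.comp (d'.comp ξ.1) := ContinuousLinearMap.comp_assoc _ _ _
      rw [e]
      calc ‖d.comp (d'.comp ξ.1)‖ ≤ Sd d * ‖d'.comp ξ.1‖ := hS_bound d _ hzF
        _ ≤ Sd d * (Sd d' * ‖ξ.1‖) :=
            mul_le_mul_of_nonneg_left (hS_bound d' ξ.1 ξ.2.1) (hS_nonneg d)
        _ ≤ Sd d * (Sd d' * 1) := by
            refine mul_le_mul_of_nonneg_left ?_ (hS_nonneg d)
            exact mul_le_mul_of_nonneg_left ξ.2.2 (hS_nonneg d')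
        _ = Sd d * Sd d' := by ring
    have h4 : Sd d' ≤ Sd d := hSadj d hd d' hd' hpair
    nlinarith [hS_nonneg d, norm_nonneg d, hS_nonneg d']
  -- injectivity
  have hinj : ∀ d ∈ D, (∀ ξ ∈ F, d.comp ξ = 0) → d = 0 := by
    intro d hd h0
    have h1 : ‖d‖ = Sd d := hiso d hd
    have h2 : Sd d = 0 := by
      have he : ∀ ξ : {ξ : L →L[ℂ] E // ξ ∈ F ∧ ‖ξ‖ ≤ 1}, ‖d.comp ξ.1‖ = (0 : ℝ) := fun ξ => by
        rw [h0 ξ.1 ξ.2.1, norm_zero]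
      rw [hSdef]
      simp only [he]
      exact ciSup_const
    exact norm_eq_zero.mp (by rw [h1, h2])
  exact ⟨hDcomp, hDadj, hideal, fun ξ hξ η hη => hGD _ ⟨ξ, hξ, η, hη, rfl⟩, hinj,
    fun d hd => hiso d hd⟩
end
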